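/- arXiv:1608.07857 — 11 statements merged into one kernel-verified Lean document; each statement's English description precedes it below -/
import Mathlib

section
/- Let λ, β, μ, T > 0, σ² ≥ 0, α > 2 and 0 < a ≤ 1. Define the density of successful receptions f(γ) = λ(a−γ) · πλγ ∫₀^∞ exp(−πλγβr − μTσ²·r^{α/2}) dr for γ ∈ (0, a). Then every critical point γ₁ ∈ (0, a) of f (i.e., every point where f′(γ₁) = 0) satisfies γ₁ < a/2. In particular, any maximizer of f on (0, a) is a transmitter fraction γ₁ < a/2, and the corresponding receiver fraction γ₂ = a − γ₁ satisfies γ₂ > a/2. -/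
open Real MeasureTheory Set

/-- Every critical point of the single-file density of successful receptions
`f(γ) = λ(a−γ) · πλγ ∫₀^∞ exp(−πλγβr − μTσ²·r^{α/2}) dr` on `(0, a)` has
transmitter fraction `γ₁ < a/2`, hence receiver fraction `a − γ₁ > a/2`. -/
theorem critical_point_transmitter_fraction_lt_half
    (lam β μ T σ2 α a γ₁ : ℝ)
    (hlam : 0 < lam) (hβ : 0 < β) (hμ : 0 < μ) (hT : 0 < T) (hσ2 : 0 ≤ σ2)
    (hα : 2 < α) (ha : 0 < a) (ha1 : a ≤ 1)
    (f : ℝ → ℝ)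
    (hf : ∀ γ, f γ = lam * (a - γ) *
      (π * lam * γ * ∫ r in Ioi (0:ℝ),
        Real.exp (-(π * lam * γ * β * r) - μ * T * σ2 * r ^ (α / 2))))
    (hγ₁ : γ₁ ∈ Ioo 0 a)
    (hcrit : HasDerivAt f 0 γ₁) :
    γ₁ < a / 2 ∧ a / 2 < a - γ₁ := by
  obtain ⟨hγ0, hγa⟩ := hγ₁
  have hπ : (0:ℝ) < π := Real.pi_pos
  set c : ℝ := π * lam * β with hc_def
  have hc : 0 < c := by positivity
  set k : ℝ := μ * T * σ2 with hk_def
  have hk : 0 ≤ k := by positivity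
  -- the integrand
  set F : ℝ → ℝ → ℝ := fun γ r => Real.exp (-(c * r * γ) - k * r ^ (α / 2)) with hF_def
  set F' : ℝ → ℝ → ℝ := fun γ r => Real.exp (-(c * r * γ) - k * r ^ (α / 2)) * (-(c * r))
    with hF'_def
  set I : ℝ → ℝ := fun γ => ∫ r in Ioi (0:ℝ), F γ r with hI_def
  -- rewrite f in terms of I
  have hfI : ∀ γ, f γ = lam * (a - γ) * (π * lam * γ * I γ) := by
    intro γ
    rw [hf γ]
    congr 1
    congr 1
    apply MeasureTheory.setIntegral_congr_fun measurableSet_Ioi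
    intro r hr
    simp only [hF_def, hc_def]
    ring_nf
  -- measurability of F x
  have hFm : ∀ x : ℝ, AEStronglyMeasurable (F x) (volume.restrict (Ioi 0)) := by
    intro x
    apply Measurable.aestronglyMeasurable
    fun_prop
  -- integrability of F γ for γ > 0
  have hFint : ∀ γ : ℝ, 0 < γ → IntegrableOn (F γ) (Ioi 0) := by
    intro γ hγ
    have hkey : IntegrableOn (fun r : ℝ => Real.exp (-(c * γ) * r)) (Ioi 0) :=
      exp_neg_integrableOn_Ioi 0 (by positivity)
    refine Integrable.mono' hkey (hFm γ) ?_
    filter_upwards [self_mem_ae_restrict measurableSet_Ioi] with r hr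
    have hr' : (0:ℝ) < r := hr
    rw [Real.norm_eq_abs, abs_of_pos (Real.exp_pos _)]
    apply Real.exp_le_exp.2
    have : 0 ≤ k * r ^ (α / 2) := mul_nonneg hk (Real.rpow_nonneg hr'.le _)
    nlinarith
  -- derivative of I via dominated convergence
  have hball : ∀ x ∈ Metric.ball γ₁ (γ₁ / 2), γ₁ / 2 < x := by
    intro x hx
    rw [Metric.mem_ball, Real.dist_eq, abs_lt] at hx
    linarith [hx.1]
  have hmain : Integrable (F' γ₁) (volume.restrict (Ioi 0)) ∧
      HasDerivAt (fun γ => ∫ r in Ioi (0:ℝ), F γ r) (∫ r in Ioi (0:ℝ), F' γ₁ r) γ₁ := by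
    apply hasDerivAt_integral_of_dominated_loc_of_deriv_le (s := Metric.ball γ₁ (γ₁ / 2)) (Metric.ball_mem_nhds _ (by positivity))
      (Filter.Eventually.of_forall hFm) (hFint γ₁ hγ0)
    · -- measurability of F' γ₁
      apply Measurable.aestronglyMeasurable
      fun_prop
    · -- bound
      filter_upwards [self_mem_ae_restrict measurableSet_Ioi] with r hr x hx
      have hr' : (0:ℝ) < r := hr
      have hx' : γ₁ / 2 < x := hball x hx
      show ‖Real.exp (-(c * r * x) - k * r ^ (α / 2)) * (-(c * r))‖ ≤
        c * (r * Real.exp (-(c * γ₁ / 2) * r))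
      rw [norm_mul, Real.norm_eq_abs, Real.norm_eq_abs, abs_of_pos (Real.exp_pos _),
        abs_neg, abs_of_pos (by positivity : (0:ℝ) < c * r)]
      have h1 : Real.exp (-(c * r * x) - k * r ^ (α / 2)) ≤ Real.exp (-(c * γ₁ / 2) * r) := by
        apply Real.exp_le_exp.2
        have h0 : 0 ≤ k * r ^ (α / 2) := mul_nonneg hk (Real.rpow_nonneg hr'.le _)
        nlinarith [mul_lt_mul_of_pos_left hx' (mul_pos hc hr')]
      calc Real.exp (-(c * r * x) - k * r ^ (α / 2)) * (c * r)
          ≤ Real.exp (-(c * γ₁ / 2) * r) * (c * r) := by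
            apply mul_le_mul_of_nonneg_right h1 (by positivity)
        _ = c * (r * Real.exp (-(c * γ₁ / 2) * r)) := by ring
    · -- integrability of the bound
      have : IntegrableOn (fun r : ℝ => r ^ (1:ℝ) * Real.exp (-(c * γ₁ / 2) * r ^ (1:ℝ)))
          (Ioi 0) := integrableOn_rpow_mul_exp_neg_mul_rpow (by norm_num) (by norm_num) (by positivity)
      have h2 : IntegrableOn (fun r : ℝ => r * Real.exp (-(c * γ₁ / 2) * r)) (Ioi 0) := by
        refine this.congr_fun (fun r hr => ?_) measurableSet_Ioi
        simp only [Real.rpow_one]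
      exact (h2.const_mul c)
    · -- differentiability
      filter_upwards [self_mem_ae_restrict measurableSet_Ioi] with r hr x hx
      have : HasDerivAt (fun γ : ℝ => -(c * r * γ) - k * r ^ (α / 2)) (-(c * r)) x := by
        simpa using (((hasDerivAt_id x).const_mul (c * r)).neg.sub_const (k * r ^ (α / 2)))
      exact this.exp
  obtain ⟨hF'int, hIderiv⟩ := hmain
  set Iv : ℝ := I γ₁ with hIv
  set Iv' : ℝ := ∫ r in Ioi (0:ℝ), F' γ₁ r with hIv'
  -- I γ₁ > 0
  have hIvpos : 0 < Iv := by
    rw [hIv, hI_def]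
    rw [MeasureTheory.setIntegral_pos_iff_support_of_nonneg_ae]
    · rw [show Function.support (F γ₁) ∩ Ioi 0 = Ioi 0 by
        apply inter_eq_right.2
        intro r _
        exact (Real.exp_pos _).ne']
      simp
    · filter_upwards with r using (Real.exp_pos _).le
    · exact hFint γ₁ hγ0
  -- I' γ₁ < 0
  have hIvneg : Iv' < 0 := by
    have : 0 < ∫ r in Ioi (0:ℝ), -(F' γ₁ r) := by
      rw [MeasureTheory.setIntegral_pos_iff_support_of_nonneg_ae]
      · rw [show Function.support (fun r => -(F' γ₁ r)) ∩ Ioi 0 = Ioi 0 by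
          apply inter_eq_right.2
          intro r hr
          have hr' : (0:ℝ) < r := hr
          simp only [hF'_def, Function.mem_support]
          have : Real.exp (-(c * r * γ₁) - k * r ^ (α / 2)) * (c * r) > 0 := by positivity
          intro h
          rw [neg_eq_zero, mul_neg, neg_eq_zero] at h
          exact this.ne' h]
        simp
      · filter_upwards [self_mem_ae_restrict measurableSet_Ioi] with r hr
        have hr' : (0:ℝ) < r := hr
        simp only [hF'_def, mul_neg, neg_neg]
        positivity
      · exact hF'int.neg
    rw [MeasureTheory.integral_neg] at this
    linarith
  -- compute derivative of f at γ₁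
  have hfderiv : HasDerivAt f
      (-lam * (π * lam * γ₁ * Iv) + lam * (a - γ₁) * (π * lam * Iv + π * lam * γ₁ * Iv')) γ₁ := by
    have h1 : HasDerivAt (fun γ : ℝ => lam * (a - γ)) (-lam) γ₁ := by
      simpa using ((hasDerivAt_id γ₁).const_sub a).const_mul lam
    have h2 : HasDerivAt (fun γ : ℝ => π * lam * γ * I γ)
        (π * lam * Iv + π * lam * γ₁ * Iv') γ₁ := by
      have h3 : HasDerivAt (fun γ : ℝ => π * lam * γ) (π * lam) γ₁ := by
        simpa using (hasDerivAt_id γ₁).const_mul (π * lam)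
      have h4 : HasDerivAt I Iv' γ₁ := hIderiv
      have := h3.mul h4
      convert this using 1 <;> first | rfl | ring
    have := h1.mul h2
    have heq : f = fun γ => lam * (a - γ) * (π * lam * γ * I γ) := funext hfI
    rw [heq]
    convert this using 1 <;> first | rfl | ring
  have hzero : -lam * (π * lam * γ₁ * Iv) +
      lam * (a - γ₁) * (π * lam * Iv + π * lam * γ₁ * Iv') = 0 :=
    hfderiv.unique hcrit
  -- conclude
  have hE : (a - 2*γ₁) * Iv + (a - γ₁) * γ₁ * Iv' = 0 := by
    have h' : lam * (π * lam) * ((a - 2*γ₁) * Iv + (a - γ₁) * γ₁ * Iv') = 0 := by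
      linear_combination hzero
    have hne : lam * (π * lam) ≠ 0 := by positivity
    exact (mul_eq_zero.mp h').resolve_left hne
  have key : γ₁ < a / 2 := by
    by_contra hcon
    push_neg at hcon
    have h1 : (a - 2*γ₁) * Iv ≤ 0 :=
      mul_nonpos_of_nonpos_of_nonneg (by linarith) hIvpos.le
    have h2 : (a - γ₁) * γ₁ * Iv' < 0 :=
      mul_neg_of_pos_of_neg (mul_pos (by linarith) hγ0) hIvneg
    linarith
  exact ⟨key, by linarith⟩
end

section
/- Let λ, μ, T > 0, σ² > 0 and 0 < a ≤ 1, and set β = 1 + √T·arctan(√T). Define p(γ) = πλγ ∫₀^∞ exp(−πλγβr − μTσ²·r²) dr and f(γ) = λ(a−γ)·p(γ) for γ ∈ (0, a). If γ₁ ∈ (0, a) satisfies f′(γ₁) = 0 (in particular, if γ₁ maximizes f on (0, a)), then f(γ₁) = λ(a−γ₁) / ( (1/γ₁)·(1/γ₁ − 1/(a−γ₁))·(2μTσ²) / ((πλ)²·β) + β ). -/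
open Real MeasureTheory Set Filter Topology


lemma d2d_tendsto_aux {s c : ℝ} (hs : 0 ≤ s) (hc : 0 < c) :
    Tendsto (fun r : ℝ => -Real.exp (-(s * r) - c * r ^ 2)) atTop (𝓝 0) := by
  have h1 : Tendsto (fun r : ℝ => -(s * r) - c * r ^ 2) atTop atBot := by
    apply tendsto_atBot_mono' atTop (f₁ := fun r : ℝ => -r) _ tendsto_neg_atTop_atBot
    filter_upwards [eventually_ge_atTop (max 1 (1 / c))] with r hr
    have hr1 : (1:ℝ) ≤ r := le_trans (le_max_left _ _) hr
    have hr2 : 1 / c ≤ r := le_trans (le_max_right _ _) hr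
    have hcr : 1 ≤ c * r := by
      rw [div_le_iff₀ hc] at hr2; linarith [mul_comm c r]
    nlinarith [mul_nonneg hs (by linarith : (0:ℝ) ≤ r)]
  have h2 := (Real.tendsto_exp_atBot).comp h1
  simpa using h2.neg

lemma d2d_hasDerivAt_aux (s c : ℝ) (r : ℝ) :
    HasDerivAt (fun r : ℝ => -Real.exp (-(s * r) - c * r ^ 2))
      ((s + 2 * c * r) * Real.exp (-(s * r) - c * r ^ 2)) r := by
  have hA : HasDerivAt (fun x : ℝ => s * x) s r := by
    simpa using (hasDerivAt_id r).const_mul s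
  have hB : HasDerivAt (fun x : ℝ => c * x ^ 2) (c * (2 * r)) r := by
    simpa using (hasDerivAt_pow 2 r).const_mul c
  have h := ((hA.neg.sub hB).exp).neg
  simp only [Pi.sub_apply, Pi.neg_apply] at h
  exact h.congr_deriv (by ring)

lemma d2d_int_exp {s c : ℝ} (hs : 0 ≤ s) (hc : 0 < c) :
    IntegrableOn (fun r : ℝ => Real.exp (-(s * r) - c * r ^ 2)) (Ioi 0) := by
  refine Integrable.mono' ((integrable_exp_neg_mul_sq hc).integrableOn)
    (Continuous.aestronglyMeasurable (by continuity)) ?_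
  filter_upwards [ae_restrict_mem measurableSet_Ioi] with r hr
  rw [Real.norm_eq_abs, abs_of_nonneg (Real.exp_nonneg _)]
  apply Real.exp_le_exp.mpr
  have : 0 ≤ s * r := mul_nonneg hs (le_of_lt hr)
  nlinarith

lemma d2d_int_deriv {s c : ℝ} (hs : 0 ≤ s) (hc : 0 < c) :
    IntegrableOn (fun r : ℝ => (s + 2 * c * r) * Real.exp (-(s * r) - c * r ^ 2)) (Ioi 0) := by
  refine integrableOn_Ioi_deriv_of_nonneg' (fun x _ => d2d_hasDerivAt_aux s c x)
    (fun x hx => ?_) (d2d_tendsto_aux hs hc)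
  have hx0 : (0:ℝ) < x := hx
  positivity

lemma d2d_integral_deriv {s c : ℝ} (hs : 0 ≤ s) (hc : 0 < c) :
    ∫ r in Ioi (0:ℝ), (s + 2 * c * r) * Real.exp (-(s * r) - c * r ^ 2) = 1 := by
  rw [integral_Ioi_of_hasDerivAt_of_tendsto' (fun x _ => d2d_hasDerivAt_aux s c x)
    (d2d_int_deriv hs hc) (d2d_tendsto_aux hs hc)]
  norm_num

lemma d2d_int_r_exp {s c : ℝ} (hs : 0 ≤ s) (hc : 0 < c) :
    IntegrableOn (fun r : ℝ => r * Real.exp (-(s * r) - c * r ^ 2)) (Ioi 0) := by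
  have h : IntegrableOn (fun r : ℝ => (2 * c)⁻¹ * ((s + 2 * c * r) * Real.exp (-(s * r) - c * r ^ 2)
      - s * Real.exp (-(s * r) - c * r ^ 2))) (Ioi 0) :=
    ((d2d_int_deriv hs hc).sub ((d2d_int_exp hs hc).const_mul s)).const_mul (2 * c)⁻¹
  refine h.congr_fun (fun r _ => ?_) measurableSet_Ioi
  field_simp
  ring

lemma d2d_ibp {s c : ℝ} (hs : 0 ≤ s) (hc : 0 < c) :
    s * (∫ r in Ioi (0:ℝ), Real.exp (-(s * r) - c * r ^ 2))
      + 2 * c * (∫ r in Ioi (0:ℝ), r * Real.exp (-(s * r) - c * r ^ 2)) = 1 := by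
  have key := d2d_integral_deriv hs hc
  have heq : ∀ r : ℝ, (s + 2 * c * r) * Real.exp (-(s * r) - c * r ^ 2)
      = s * Real.exp (-(s * r) - c * r ^ 2) + (2 * c) * (r * Real.exp (-(s * r) - c * r ^ 2)) := by
    intro r; ring
  rw [show (fun r : ℝ => (s + 2 * c * r) * Real.exp (-(s * r) - c * r ^ 2))
      = (fun r : ℝ => s * Real.exp (-(s * r) - c * r ^ 2)
        + (2 * c) * (r * Real.exp (-(s * r) - c * r ^ 2))) from funext heq] at key
  rw [integral_add ((d2d_int_exp hs hc).const_mul s) ((d2d_int_r_exp hs hc).const_mul (2*c)),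
    integral_const_mul, integral_const_mul] at key
  linarith

/-- For path-loss exponent `α = 4` with `β = 1 + √T·arctan √T`, at any critical
point `γ₁ ∈ (0,a)` of the density of successful receptions
`f(γ) = λ(a−γ)·p(γ)` with `p(γ) = πλγ ∫₀^∞ exp(−πλγβr − μTσ²r²) dr`, the value
of `f` admits the stated closed form. -/
theorem dsr_value_at_critical_point_alpha_four
    (lam μ T σ2 a γ₁ : ℝ)
    (hlam : 0 < lam) (hμ : 0 < μ) (hT : 0 < T) (hσ2 : 0 < σ2)
    (ha : 0 < a) (ha1 : a ≤ 1)
    (β : ℝ) (hβ : β = 1 + Real.sqrt T * Real.arctan (Real.sqrt T))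
    (p f : ℝ → ℝ)
    (hp : ∀ γ, p γ = π * lam * γ * ∫ r in Ioi (0:ℝ),
      Real.exp (-(π * lam * γ * β * r) - μ * T * σ2 * r ^ 2))
    (hf : ∀ γ, f γ = lam * (a - γ) * p γ)
    (hγ₁ : γ₁ ∈ Ioo 0 a)
    (hcrit : HasDerivAt f 0 γ₁) :
    f γ₁ = lam * (a - γ₁) /
      ((1 / γ₁) * (1 / γ₁ - 1 / (a - γ₁)) * (2 * μ * T * σ2) /
        ((π * lam) ^ 2 * β) + β) := by
  obtain ⟨hγ0, hγa⟩ := hγ₁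
  have hπ : (0:ℝ) < π := Real.pi_pos
  have hβpos : (0:ℝ) < β := by
    rw [hβ]
    have h0 : Real.arctan 0 ≤ Real.arctan (Real.sqrt T) :=
      Real.arctan_strictMono.monotone (Real.sqrt_nonneg T)
    rw [Real.arctan_zero] at h0
    have h := mul_nonneg (Real.sqrt_nonneg T) h0
    linarith
  have hc : (0:ℝ) < μ * T * σ2 := by positivity
  have hs₁ : (0:ℝ) < π * lam * γ₁ * β := by positivity
  have haγ : (0:ℝ) < a - γ₁ := by linarith
  -- differentiation under the integral sign
  have hDI : HasDerivAt
      (fun γ : ℝ => ∫ r in Ioi (0:ℝ), Real.exp (-(π * lam * γ * β * r) - μ * T * σ2 * r ^ 2))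
      (∫ r in Ioi (0:ℝ), -(π * lam * β * r) *
        Real.exp (-(π * lam * γ₁ * β * r) - μ * T * σ2 * r ^ 2)) γ₁ := by
    have key := hasDerivAt_integral_of_dominated_loc_of_deriv_le
      (μ := volume.restrict (Ioi (0:ℝ))) (x₀ := γ₁) (s := Metric.ball γ₁ γ₁)
      (F := fun γ r => Real.exp (-(π * lam * γ * β * r) - μ * T * σ2 * r ^ 2))
      (F' := fun γ r => -(π * lam * β * r) *
        Real.exp (-(π * lam * γ * β * r) - μ * T * σ2 * r ^ 2))
      (bound := fun r => (π * lam * β) * (r * Real.exp (-(0 * r) - μ * T * σ2 * r ^ 2)))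
      (Metric.ball_mem_nhds γ₁ hγ0)
      (Eventually.of_forall fun x => (Continuous.aestronglyMeasurable (by fun_prop)))
      (d2d_int_exp hs₁.le hc)
      (Continuous.aestronglyMeasurable (by fun_prop))
      ?_ (((d2d_int_r_exp le_rfl hc).const_mul (π * lam * β)))
      ?_
    · exact key.2
    · filter_upwards [ae_restrict_mem measurableSet_Ioi] with r hr
      intro x hx
      have hx0 : 0 < x := by
        have h := Metric.mem_ball.mp hx
        rw [Real.dist_eq, abs_lt] at h
        linarith [h.1]
      have hr0 : (0:ℝ) < r := hr
      rw [norm_mul, norm_neg, Real.norm_eq_abs, Real.norm_eq_abs,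
        abs_of_nonneg (by positivity : (0:ℝ) ≤ π * lam * β * r),
        abs_of_nonneg (Real.exp_nonneg _)]
      have hee : Real.exp (-(π * lam * x * β * r) - μ * T * σ2 * r ^ 2)
          ≤ Real.exp (-(0 * r) - μ * T * σ2 * r ^ 2) := by
        apply Real.exp_le_exp.mpr
        have h0 : 0 ≤ π * lam * x * β * r := by positivity
        nlinarith
      calc π * lam * β * r * Real.exp (-(π * lam * x * β * r) - μ * T * σ2 * r ^ 2)
          ≤ π * lam * β * r * Real.exp (-(0 * r) - μ * T * σ2 * r ^ 2) := by
            apply mul_le_mul_of_nonneg_left hee (by positivity)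
        _ = π * lam * β * (r * Real.exp (-(0 * r) - μ * T * σ2 * r ^ 2)) := by ring
    · filter_upwards [ae_restrict_mem measurableSet_Ioi] with r hr
      intro x hx
      have hfun : (fun y : ℝ => Real.exp (-(π * lam * y * β * r) - μ * T * σ2 * r ^ 2))
          = fun y : ℝ => Real.exp ((-(π * lam * β * r)) * y + (-(μ * T * σ2 * r ^ 2))) := by
        funext y; congr 1; ring
      rw [hfun]
      have h := (((hasDerivAt_id x).const_mul (-(π * lam * β * r))).add_const
        (-(μ * T * σ2 * r ^ 2))).exp
      refine h.congr_deriv ?_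
      simp only [id_eq]
      rw [show (-(π * lam * β * r)) * x + (-(μ * T * σ2 * r ^ 2))
          = -(π * lam * x * β * r) - μ * T * σ2 * r ^ 2 from by ring]
      ring
  beta_reduce at hDI
  have hval : (∫ r in Ioi (0:ℝ), -(π * lam * β * r) *
        Real.exp (-(π * lam * γ₁ * β * r) - μ * T * σ2 * r ^ 2))
      = -(π * lam * β) * (∫ r in Ioi (0:ℝ),
        r * Real.exp (-(π * lam * γ₁ * β * r) - μ * T * σ2 * r ^ 2)) := by
    rw [← integral_const_mul]
    apply setIntegral_congr_fun measurableSet_Ioi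
    intro r _
    ring
  rw [hval] at hDI
  have h1 : HasDerivAt (fun x : ℝ => lam * (a - x)) (lam * (-1)) γ₁ :=
    ((hasDerivAt_id γ₁).const_sub a).const_mul lam
  have h2 : HasDerivAt (fun x : ℝ => π * lam * x) (π * lam * 1) γ₁ :=
    (hasDerivAt_id γ₁).const_mul (π * lam)
  have hfd := h1.mul (h2.mul hDI)
  beta_reduce at hfd
  have hfeq : (fun y : ℝ => lam * (a - y) * (π * lam * y * (∫ r in Ioi (0:ℝ),
      Real.exp (-(π * lam * y * β * r) - μ * T * σ2 * r ^ 2)))) = f := by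
    funext γ; rw [hf, hp]
  simp only [Pi.mul_def] at hfd
  rw [hfeq] at hfd
  have hD0 := hcrit.unique hfd
  have hIBP := d2d_ibp (s := π * lam * γ₁ * β) (c := μ * T * σ2) hs₁.le hc
  rw [hf, hp]
  set X := ∫ r in Ioi (0:ℝ), Real.exp (-(π * lam * γ₁ * β * r) - μ * T * σ2 * r ^ 2) with hX
  set Y := ∫ r in Ioi (0:ℝ), r * Real.exp (-(π * lam * γ₁ * β * r) - μ * T * σ2 * r ^ 2) with hY
  -- now pure algebra
  have hXD : X * (2 * (μ * T * σ2) * (a - 2 * γ₁) + (a - γ₁) * γ₁ ^ 2 * (π * lam * β) ^ 2)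
      = (a - γ₁) * γ₁ * (π * lam * β) := by
    have hml : π * lam ^ 2 ≠ 0 := by positivity
    apply mul_left_cancel₀ hml
    linear_combination (-(2 * (μ * T * σ2))) * hD0
      + (π * lam ^ 2 * (a - γ₁) * γ₁ * (π * lam * β)) * hIBP
  have hkpos : (0:ℝ) < (a - γ₁) * γ₁ * (π * lam * β) := by positivity
  have hDden : (2 * (μ * T * σ2) * (a - 2 * γ₁) + (a - γ₁) * γ₁ ^ 2 * (π * lam * β) ^ 2) ≠ 0 := by
    intro h
    rw [h, mul_zero] at hXD
    linarith
  have hXval : X = (a - γ₁) * γ₁ * (π * lam * β)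
      / (2 * (μ * T * σ2) * (a - 2 * γ₁) + (a - γ₁) * γ₁ ^ 2 * (π * lam * β) ^ 2) := by
    rw [eq_div_iff hDden]; exact hXD
  have hQ : (1 / γ₁) * (1 / γ₁ - 1 / (a - γ₁)) * (2 * μ * T * σ2) / ((π * lam) ^ 2 * β) + β
      = (2 * (μ * T * σ2) * (a - 2 * γ₁) + (a - γ₁) * γ₁ ^ 2 * (π * lam * β) ^ 2)
        / (γ₁ ^ 2 * (a - γ₁) * (π * lam) ^ 2 * β) := by
    field_simp
    ring
  rw [hQ, div_div_eq_mul_div, hXval]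
  field_simp
end

section
/- Let λ, μ, T > 0, σ² > 0 and 0 < a ≤ 1, and set β = 1 + √T·arctan(√T). Define p(γ) = πλγ ∫₀^∞ exp(−πλγβr − μTσ²·r²) dr and f(γ) = λ(a−γ)·p(γ) for γ ∈ (0, a). If γ₁ ∈ (0, a) satisfies f′(γ₁) = 0, then (1/γ₁)·(1/γ₁ − 1/(a−γ₁)) = ((πλ)²β² / (2μTσ²)) · ( 1/(β·p(γ₁)) − 1 ), and the right-hand side is strictly positive. -/
open Real MeasureTheory Set

open Filter

lemma aux_key_ineq {c : ℝ} (hc : 0 < c) (u r : ℝ) :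
    -(u*r) - c*r^2 ≤ u^2/(2*c) + -(c/2)*r^2 := by
  rw [← sub_nonneg]
  have h : u^2/(2*c) + -(c/2)*r^2 - (-(u*r) - c*r^2) = (u+c*r)^2/(2*c) := by
    field_simp; ring
  rw [h]; positivity

lemma aux_int_exp {c : ℝ} (hc : 0 < c) (u : ℝ) :
    Integrable (fun r : ℝ => Real.exp (-(u*r) - c*r^2)) := by
  have h1 : Integrable (fun r : ℝ => Real.exp (u^2/(2*c)) * Real.exp (-(c/2)*r^2)) :=
    (integrable_exp_neg_mul_sq (by positivity)).const_mul _
  refine h1.mono' (Continuous.aestronglyMeasurable (by fun_prop)) ?_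
  filter_upwards with r
  rw [Real.norm_eq_abs, abs_of_pos (Real.exp_pos _), ← Real.exp_add]
  exact Real.exp_le_exp.mpr (aux_key_ineq hc u r)

lemma aux_int_rexp {c : ℝ} (hc : 0 < c) (u : ℝ) :
    Integrable (fun r : ℝ => r * Real.exp (-(u*r) - c*r^2)) := by
  have h1 : Integrable (fun r : ℝ => Real.exp (u^2/(2*c)) * |r * Real.exp (-(c/2)*r^2)|) :=
    ((integrable_mul_exp_neg_mul_sq (show (0:ℝ) < c/2 by positivity)).abs).const_mul _
  refine h1.mono' (Continuous.aestronglyMeasurable (by fun_prop)) ?_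
  filter_upwards with r
  rw [Real.norm_eq_abs, abs_mul, abs_mul, abs_of_pos (Real.exp_pos _),
    abs_of_pos (Real.exp_pos _), ← mul_assoc, mul_comm (Real.exp _) |r|, mul_assoc,
    ← Real.exp_add]
  exact mul_le_mul_of_nonneg_left (Real.exp_le_exp.mpr (aux_key_ineq hc u r)) (abs_nonneg r)

lemma aux_tendsto {c : ℝ} (hc : 0 < c) (u : ℝ) :
    Tendsto (fun r : ℝ => Real.exp (-(u*r) - c*r^2)) atTop (nhds 0) := by
  apply Real.tendsto_exp_atBot.comp
  apply tendsto_atBot_mono (fun r => aux_key_ineq hc u r)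
  apply tendsto_atBot_add_const_left
  have h2 : Tendsto (fun x:ℝ => (c/2)*x^2) atTop atTop :=
    (tendsto_pow_atTop two_ne_zero).const_mul_atTop (by positivity)
  simpa [neg_mul] using tendsto_neg_atBot_iff.mpr h2

lemma aux_byparts {c : ℝ} (hc : 0 < c) (u : ℝ) :
    u * (∫ r in Ioi (0:ℝ), Real.exp (-(u*r) - c*r^2))
      + 2*c*(∫ r in Ioi (0:ℝ), r * Real.exp (-(u*r) - c*r^2)) = 1 := by
  have hd : ∀ x ∈ Ici (0:ℝ), HasDerivAt (fun r => -Real.exp (-(u*r) - c*r^2))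
      (u * Real.exp (-(u*x) - c*x^2) + 2*c*(x * Real.exp (-(u*x) - c*x^2))) x := by
    intro x _
    have h1 : HasDerivAt (fun r : ℝ => -(u*r) - c*r^2) (-u - 2*c*x) x := by
      have := ((hasDerivAt_id x).const_mul u).neg.sub
        (((hasDerivAt_pow 2 x)).const_mul c)
      exact this.congr_deriv (by ring)
    have := (h1.exp).neg
    exact this.congr_deriv (by ring)
  have hint : IntegrableOn (fun x : ℝ =>
      u * Real.exp (-(u*x) - c*x^2) + 2*c*(x * Real.exp (-(u*x) - c*x^2))) (Ioi 0) := by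
    exact (((aux_int_exp hc u).const_mul u).add
      ((aux_int_rexp hc u).const_mul (2*c))).integrableOn
  have htd : Tendsto (fun r : ℝ => -Real.exp (-(u*r) - c*r^2)) atTop (nhds 0) := by
    simpa using (aux_tendsto hc u).neg
  have := integral_Ioi_of_hasDerivAt_of_tendsto' hd hint htd
  rw [MeasureTheory.integral_add ((aux_int_exp hc u).const_mul u).integrableOn
      ((aux_int_rexp hc u).const_mul (2*c)).integrableOn,
    MeasureTheory.integral_const_mul, MeasureTheory.integral_const_mul] at this
  simp at this
  linarith

lemma aux_deriv {c : ℝ} (hc : 0 < c) (u₀ : ℝ) :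
    HasDerivAt (fun u => ∫ r in Ioi (0:ℝ), Real.exp (-(u*r) - c*r^2))
      (-∫ r in Ioi (0:ℝ), r * Real.exp (-(u₀*r) - c*r^2)) u₀ := by
  have key := hasDerivAt_integral_of_dominated_loc_of_deriv_le
    (F := fun u (r : ℝ) => Real.exp (-(u*r) - c*r^2))
    (F' := fun u (r : ℝ) => -(r * Real.exp (-(u*r) - c*r^2)))
    (x₀ := u₀) (s := Metric.ball u₀ 1) (μ := volume.restrict (Ioi 0))
    (bound := fun r => r * Real.exp (-((u₀-1)*r) - c*r^2))
    (Metric.ball_mem_nhds u₀ one_pos)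
    (Eventually.of_forall fun u =>
      (Continuous.aestronglyMeasurable (by fun_prop)))
    (aux_int_exp hc u₀).integrableOn
    (Continuous.aestronglyMeasurable (by fun_prop))
    ?_ (aux_int_rexp hc (u₀-1)).integrableOn ?_
  · have := key.2
    rwa [MeasureTheory.integral_neg] at this
  · rw [ae_restrict_iff' measurableSet_Ioi]
    filter_upwards with r hr u hu
    rw [norm_neg, Real.norm_eq_abs, abs_mul, abs_of_pos hr, abs_of_pos (Real.exp_pos _)]
    apply mul_le_mul_of_nonneg_left _ hr.le
    apply Real.exp_le_exp.mpr
    have : u₀ - 1 ≤ u := by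
      have := abs_lt.mp (by simpa [Real.dist_eq] using Metric.mem_ball.mp hu)
      linarith [this.1]
    nlinarith [le_of_lt (show (0:ℝ) < r from hr)]
  · filter_upwards with r u _
    have h1 : HasDerivAt (fun u : ℝ => -(u*r) - c*r^2) (-r) u := by
      have := (((hasDerivAt_id u).mul_const r).neg.sub_const (c*r^2))
      simpa using this
    have := h1.exp
    exact this.congr_deriv (by ring)

lemma aux_J_pos {c : ℝ} (hc : 0 < c) (u : ℝ) :
    0 < ∫ r in Ioi (0:ℝ), Real.exp (-(u*r) - c*r^2) := by
  rw [setIntegral_pos_iff_support_of_nonneg_ae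
    (Eventually.of_forall fun r => (Real.exp_pos _).le) (aux_int_exp hc u).integrableOn]
  have : Function.support (fun r : ℝ => Real.exp (-(u*r) - c*r^2)) = Set.univ := by
    ext r; simp [Function.mem_support, (Real.exp_pos _).ne']
  rw [this, Set.univ_inter]
  simp

lemma aux_K_pos {c : ℝ} (hc : 0 < c) (u : ℝ) :
    0 < ∫ r in Ioi (0:ℝ), r * Real.exp (-(u*r) - c*r^2) := by
  have hnn : 0 ≤ᶠ[ae (volume.restrict (Ioi (0:ℝ)))]
      fun r : ℝ => r * Real.exp (-(u*r) - c*r^2) := by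
    rw [EventuallyLE, ae_restrict_iff' measurableSet_Ioi]
    filter_upwards with r hr
    have : (0:ℝ) < r := hr
    positivity
  rw [setIntegral_pos_iff_support_of_nonneg_ae hnn (aux_int_rexp hc u).integrableOn]
  have hsub : Ioi (0:ℝ) ⊆ Function.support (fun r : ℝ => r * Real.exp (-(u*r) - c*r^2)) ∩ Ioi 0 := by
    intro r hr
    refine ⟨?_, hr⟩
    simp only [Function.mem_support, mul_ne_zero_iff]
    exact ⟨ne_of_gt hr, (Real.exp_pos _).ne'⟩
  calc (0:ENNReal) < volume (Ioi (0:ℝ)) := by simp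
  _ ≤ _ := measure_mono hsub

/-- For path-loss exponent `α = 4` with `β = 1 + √T·arctan √T`, any critical
point `γ₁ ∈ (0,a)` of `f(γ) = λ(a−γ)·p(γ)` satisfies
`(1/γ₁)(1/γ₁ − 1/(a−γ₁)) = ((πλ)²β²/(2μTσ²))·(1/(β·p(γ₁)) − 1)`, and the
right-hand side is strictly positive. -/
theorem critical_point_identity_alpha_four
    (lam μ T σ2 a γ₁ : ℝ)
    (hlam : 0 < lam) (hμ : 0 < μ) (hT : 0 < T) (hσ2 : 0 < σ2)
    (ha : 0 < a) (ha1 : a ≤ 1)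
    (β : ℝ) (hβ : β = 1 + Real.sqrt T * Real.arctan (Real.sqrt T))
    (p f : ℝ → ℝ)
    (hp : ∀ γ, p γ = π * lam * γ * ∫ r in Ioi (0:ℝ),
      Real.exp (-(π * lam * γ * β * r) - μ * T * σ2 * r ^ 2))
    (hf : ∀ γ, f γ = lam * (a - γ) * p γ)
    (hγ₁ : γ₁ ∈ Ioo 0 a)
    (hcrit : HasDerivAt f 0 γ₁) :
    (1 / γ₁) * (1 / γ₁ - 1 / (a - γ₁)) =
      ((π * lam) ^ 2 * β ^ 2 / (2 * μ * T * σ2)) * (1 / (β * p γ₁) - 1) ∧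
    0 < ((π * lam) ^ 2 * β ^ 2 / (2 * μ * T * σ2)) * (1 / (β * p γ₁) - 1) := by
  obtain ⟨hγ0, hγa⟩ := hγ₁
  set c : ℝ := μ * T * σ2 with hcdef
  have hc : 0 < c := by positivity
  have hβ1 : 1 ≤ β := by
    rw [hβ]
    have h0 : (0:ℝ) ≤ Real.arctan (Real.sqrt T) := by
      rw [← Real.arctan_zero]
      exact Real.arctan_strictMono.monotone (Real.sqrt_nonneg T)
    nlinarith [Real.sqrt_nonneg T]
  have hβ0 : 0 < β := lt_of_lt_of_le one_pos hβ1
  set J : ℝ → ℝ := fun u => ∫ r in Ioi (0:ℝ), Real.exp (-(u*r) - c*r^2) with hJdef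
  set u₀ : ℝ := π * lam * γ₁ * β with hu₀def
  have hu₀ : 0 < u₀ := by positivity
  set Kv : ℝ := ∫ r in Ioi (0:ℝ), r * Real.exp (-(u₀*r) - c*r^2) with hKdef
  have hJpos : 0 < J u₀ := aux_J_pos hc u₀
  have hKpos : 0 < Kv := aux_K_pos hc u₀
  have hBP : u₀ * J u₀ + 2*c*Kv = 1 := aux_byparts hc u₀
  -- p as a function of J
  have hpJ : ∀ γ, p γ = π * lam * γ * J (π * lam * γ * β) := by
    intro γ; rw [hp]
  -- derivative of p
  have h1 : HasDerivAt (fun γ : ℝ => π * lam * γ * β) (π * lam * β) γ₁ := by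
    have := ((hasDerivAt_id γ₁).const_mul (π * lam)).mul_const β
    simpa using this
  have hJd : HasDerivAt J (-Kv) u₀ := aux_deriv hc u₀
  have h2 : HasDerivAt (fun γ : ℝ => J (π * lam * γ * β)) (-Kv * (π * lam * β)) γ₁ := by
    have h2' : HasDerivAt J (-Kv) (π * lam * γ₁ * β) := hJd
    simpa [Function.comp_def] using h2'.comp γ₁ h1
  have h3 : HasDerivAt (fun γ : ℝ => π * lam * γ) (π * lam) γ₁ := by
    simpa using (hasDerivAt_id γ₁).const_mul (π * lam)
  have hpd : HasDerivAt p (π * lam * J u₀ + π * lam * γ₁ * (-Kv * (π * lam * β))) γ₁ := by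
    have := h3.mul h2
    have hfun : p = fun γ : ℝ => π * lam * γ * J (π * lam * γ * β) := funext hpJ
    rw [hfun]
    exact this
  -- derivative of f
  have h4 : HasDerivAt (fun γ : ℝ => lam * (a - γ)) (lam * (-1)) γ₁ := by
    have := ((hasDerivAt_id γ₁).const_sub a).const_mul lam
    simpa using this
  have hfd : HasDerivAt f (lam * (-1) * p γ₁ +
      lam * (a - γ₁) * (π * lam * J u₀ + π * lam * γ₁ * (-Kv * (π * lam * β)))) γ₁ := by
    have := h4.mul hpd
    have hfun : f = fun γ : ℝ => lam * (a - γ) * p γ := funext hf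
    rw [hfun]
    exact this
  have hE : lam * (-1) * p γ₁ +
      lam * (a - γ₁) * (π * lam * J u₀ + π * lam * γ₁ * (-Kv * (π * lam * β))) = 0 :=
    hfd.unique hcrit
  have hpval : p γ₁ = π * lam * γ₁ * J u₀ := by rw [hpJ, hu₀def]
  rw [hpval] at hE ⊢
  have hπ : (0:ℝ) < π := Real.pi_pos
  -- key simplified critical equation
  have hE1 : γ₁ * J u₀ = (a - γ₁) * (J u₀ - u₀ * Kv) := by
    have hne : (lam * (π * lam)) ≠ 0 := by positivity
    apply mul_left_cancel₀ hne
    rw [hu₀def]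
    nlinarith [hE]
  have hβp : β * (π * lam * γ₁ * J u₀) = u₀ * J u₀ := by rw [hu₀def]; ring
  constructor
  · rw [div_sub_div _ _ (ne_of_gt hγ0) (ne_of_gt (by linarith : (0:ℝ) < a - γ₁))]
    rw [hβp]
    field_simp
    rw [hu₀def] at hE1 hBP ⊢
    linear_combination (-(2*c*(π*lam*γ₁*β)))*hE1 + ((π*lam)^2*β^2*γ₁^2*(a-γ₁))*hBP
  · rw [hβp]
    have hlt : u₀ * J u₀ < 1 := by nlinarith
    have h5 : 0 < 1 / (u₀ * J u₀) - 1 := by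
      rw [sub_pos, lt_div_iff₀ (by positivity)]
      linarith
    exact mul_pos (by positivity) h5
end

section
/- Let λ, β > 0, α > 2 and c > 0. For s ≥ 0 define F(s) = πλ ∫₀^∞ exp(−πλβr − c·s·r^{α/2}) dr. Then F admits the first-order expansion F(s) = 1/β − c·s·Γ(1 + α/2)·(πλ)^{−α/2}·β^{−(α/2+1)} + o(s) as s → 0⁺; equivalently, lim_{s→0⁺} (F(s) − 1/β)/s = −c·Γ(1 + α/2)·(πλ)^{−α/2}·β^{−(α/2+1)}, where Γ denotes the Gamma function. -/
set_option maxHeartbeats 1000000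

open Real MeasureTheory Set Filter

/-- Small-noise expansion of the coverage probability:
`F(s) = πλ ∫₀^∞ exp(−πλβr − c·s·r^{α/2}) dr` satisfies
`(F(s) − 1/β)/s → −c·Γ(1+α/2)·(πλ)^{−α/2}·β^{−(α/2+1)}` as `s → 0⁺`. -/
theorem coverage_small_noise_expansion
    (lam β α c : ℝ) (hlam : 0 < lam) (hβ : 0 < β) (hα : 2 < α) (hc : 0 < c)
    (F : ℝ → ℝ)
    (hF : ∀ s, 0 ≤ s → F s = π * lam * ∫ r in Ioi (0:ℝ),
      Real.exp (-(π * lam * β * r) - c * s * r ^ (α / 2))) :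
    Tendsto (fun s => (F s - 1 / β) / s) (nhdsWithin 0 (Ioi 0))
      (nhds (-(c * Real.Gamma (1 + α / 2) * (π * lam) ^ (-(α / 2)) *
        β ^ (-(α / 2 + 1))))) := by
  set a := π * lam * β with ha_def
  set p := α / 2 with hp_def
  have hpl : 0 < π * lam := mul_pos pi_pos hlam
  have ha : 0 < a := mul_pos hpl hβ
  have hp : 1 < p := by rw [hp_def]; linarith
  -- measurability of the integrand
  have hmeas : ∀ s : ℝ, Measurable fun r : ℝ =>
      Real.exp (-(a * r) - c * s * r ^ p) := by
    intro s
    fun_prop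
  -- integrability of exp(-(a*r))
  have hint0 : IntegrableOn (fun r : ℝ => Real.exp (-(a * r))) (Ioi 0) :=
    (exp_neg_integrableOn_Ioi 0 ha).congr_fun (fun x _ => by simp only [neg_mul]) measurableSet_Ioi
  -- integrability
  have hint : ∀ s : ℝ, 0 ≤ s → IntegrableOn
      (fun r : ℝ => Real.exp (-(a * r) - c * s * r ^ p)) (Ioi 0) := by
    intro s hs
    refine Integrable.mono' hint0 ((hmeas s).aestronglyMeasurable)
      (Filter.eventually_of_mem (self_mem_ae_restrict measurableSet_Ioi) fun r hr => ?_)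
    have hr' : (0:ℝ) < r := hr
    rw [Real.norm_eq_abs, abs_of_pos (exp_pos _)]
    apply Real.exp_le_exp.2
    have : 0 ≤ c * s * r ^ p := by positivity
    linarith
  -- value of ∫ exp(-(a*r))
  have hI0 : (∫ r in Ioi (0:ℝ), Real.exp (-(a * r))) = 1 / a := by
    have := integral_rpow_mul_exp_neg_mul_Ioi (a := 1) (r := a) one_pos ha
    simp only [sub_self, Real.rpow_zero, one_mul, Real.rpow_one, Real.Gamma_one, mul_one] at this
    exact this
  -- value of ∫ r^p exp(-(a*r))
  have hIp : (∫ r in Ioi (0:ℝ), r ^ p * Real.exp (-(a * r)))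
      = (1 / a) ^ (p + 1) * Real.Gamma (p + 1) := by
    have := integral_rpow_mul_exp_neg_mul_Ioi (a := p + 1) (r := a) (by linarith) ha
    simpa using this
  -- integrable bound
  have hbd : IntegrableOn (fun r : ℝ => π * lam * c * (r ^ p * Real.exp (-(a * r)))) (Ioi 0) := by
    have := (integrableOn_rpow_mul_exp_neg_mul_rpow (p := 1) (s := p) (b := a)
      (by linarith) one_pos ha)
    refine ((this.congr_fun (fun x _ => by simp only [Real.rpow_one, neg_mul])
      measurableSet_Ioi).const_mul (π * lam * c))
  -- the key: rewrite (F s - 1/β)/s for s > 0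
  have hre : ∀ᶠ s in nhdsWithin (0:ℝ) (Ioi 0), (F s - 1 / β) / s
      = ∫ r in Ioi (0:ℝ),
        π * lam * ((Real.exp (-(a * r) - c * s * r ^ p) - Real.exp (-(a * r))) / s) := by
    filter_upwards [self_mem_nhdsWithin] with s hs
    have hs0 : (0:ℝ) < s := hs
    have h1 : F s = π * lam * ∫ r in Ioi (0:ℝ),
        Real.exp (-(a * r) - c * s * r ^ p) := hF s hs0.le
    have h2 : (1:ℝ) / β = π * lam * ∫ r in Ioi (0:ℝ), Real.exp (-(a * r)) := by
      rw [hI0, ha_def]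
      field_simp
    rw [h1, h2, ← mul_sub, ← integral_sub (hint s hs0.le) hint0]
    rw [eq_comm]
    rw [show (fun r : ℝ => π * lam *
        ((Real.exp (-(a * r) - c * s * r ^ p) - Real.exp (-(a * r))) / s))
      = (fun r : ℝ => (π * lam / s) *
        ((Real.exp (-(a * r) - c * s * r ^ p) - Real.exp (-(a * r))))) from
      funext fun r => by ring]
    rw [MeasureTheory.integral_const_mul]
    ring
  rw [Filter.tendsto_congr' hre]
  have hmeas2 : ∀ s : ℝ, Measurable fun r : ℝ =>
      π * lam * ((Real.exp (-(a * r) - c * s * r ^ p) - Real.exp (-(a * r))) / s) := by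
    intro s
    have m0 : Measurable fun r : ℝ => Real.exp (-(a * r)) :=
      Real.measurable_exp.comp (measurable_const.mul measurable_id).neg
    exact measurable_const.mul (((hmeas s).sub m0).div_const s)
  have key : Tendsto (fun s => ∫ r in Ioi (0:ℝ),
      π * lam * ((Real.exp (-(a * r) - c * s * r ^ p) - Real.exp (-(a * r))) / s))
      (nhdsWithin 0 (Ioi 0))
      (nhds (∫ r in Ioi (0:ℝ), π * lam * (-(c * r ^ p) * Real.exp (-(a * r))))) := by
    refine MeasureTheory.tendsto_integral_filter_of_dominated_convergence
      (fun r => π * lam * c * (r ^ p * Real.exp (-(a * r)))) ?_ ?_ hbd ?_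
    · filter_upwards [self_mem_nhdsWithin] with s hs
      exact (hmeas2 s).aestronglyMeasurable
    · filter_upwards [self_mem_nhdsWithin] with s hs
      have hs0 : (0:ℝ) < s := hs
      refine Filter.eventually_of_mem (self_mem_ae_restrict measurableSet_Ioi) fun r hr => ?_
      have hr' : (0:ℝ) < r := hr
      have hx : 0 ≤ c * s * r ^ p := by positivity
      have hexp : Real.exp (-(a * r) - c * s * r ^ p) - Real.exp (-(a * r))
          = Real.exp (-(a * r)) * (Real.exp (-(c * s * r ^ p)) - 1) := by
        rw [mul_sub, mul_one, ← Real.exp_add]; ring_nf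
      have hle1 : Real.exp (-(c * s * r ^ p)) - 1 ≤ 0 := by
        have := Real.exp_le_exp.2 (neg_nonpos_of_nonneg hx)
        simp only [Real.exp_zero] at this; linarith
      have h1 : 1 - Real.exp (-(c * s * r ^ p)) ≤ c * s * r ^ p := by
        nlinarith [Real.add_one_le_exp (-(c * s * r ^ p))]
      have habs : ‖π * lam * ((Real.exp (-(a * r) - c * s * r ^ p) - Real.exp (-(a * r))) / s)‖
          = π * lam * ((Real.exp (-(a * r)) * (1 - Real.exp (-(c * s * r ^ p)))) / s) := by
        rw [Real.norm_eq_abs, abs_mul, abs_of_pos hpl, abs_div, abs_of_pos hs0, hexp,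
          abs_mul, abs_of_pos (Real.exp_pos _), abs_of_nonpos hle1]
        ring
      rw [habs]
      have h2 : (Real.exp (-(a * r)) * (1 - Real.exp (-(c * s * r ^ p)))) / s
          ≤ c * (r ^ p * Real.exp (-(a * r))) := by
        rw [div_le_iff₀ hs0]
        nlinarith [mul_le_mul_of_nonneg_left h1 (Real.exp_pos (-(a * r))).le]
      calc π * lam * ((Real.exp (-(a * r)) * (1 - Real.exp (-(c * s * r ^ p)))) / s)
          ≤ π * lam * (c * (r ^ p * Real.exp (-(a * r)))) :=
            mul_le_mul_of_nonneg_left h2 hpl.le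
        _ = π * lam * c * (r ^ p * Real.exp (-(a * r))) := by ring
    · refine Filter.eventually_of_mem (self_mem_ae_restrict measurableSet_Ioi) fun r hr => ?_
      have hr' : (0:ℝ) < r := hr
      have hu : HasDerivAt (fun s : ℝ => -(a * r) - c * s * r ^ p) (-(c * r ^ p)) 0 := by
        simpa using (((hasDerivAt_id (0:ℝ)).const_mul c).mul_const (r ^ p)).const_sub (-(a * r))
      have hd : HasDerivAt (fun s : ℝ => Real.exp (-(a * r) - c * s * r ^ p))
          (Real.exp (-(a * r)) * (-(c * r ^ p))) 0 := by
        simpa using hu.exp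
      have hslope := hasDerivAt_iff_tendsto_slope.1 hd
      have hmono : nhdsWithin (0:ℝ) (Ioi 0) ≤ nhdsWithin 0 {0}ᶜ :=
        nhdsWithin_mono 0 (fun y hy => ne_of_gt hy)
      have htend := (hslope.mono_left hmono).const_mul (π * lam)
      have heq2 : π * lam * (Real.exp (-(a * r)) * -(c * r ^ p))
          = π * lam * (-(c * r ^ p) * Real.exp (-(a * r))) := by ring
      rw [← heq2]
      refine Filter.Tendsto.congr' ?_ htend
      filter_upwards [self_mem_nhdsWithin] with s hs
      rw [slope_def_field]
      norm_num
  have hval : (∫ r in Ioi (0:ℝ), π * lam * (-(c * r ^ p) * Real.exp (-(a * r))))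
      = -(c * Real.Gamma (1 + p) * (π * lam) ^ (-p) * β ^ (-(p + 1))) := by
    have heq : (fun r : ℝ => π * lam * (-(c * r ^ p) * Real.exp (-(a * r))))
        = fun r => (-(π * lam * c)) * (r ^ p * Real.exp (-(a * r))) := funext fun r => by ring
    rw [heq, MeasureTheory.integral_const_mul, hIp]
    have h1 : (1 / a) ^ (p + 1) = (π * lam) ^ (-(p + 1)) * β ^ (-(p + 1)) := by
      rw [one_div, Real.inv_rpow ha.le, ← Real.rpow_neg ha.le, ha_def,
        Real.mul_rpow hpl.le hβ.le]
    have h2 : π * lam * (π * lam) ^ (-(p + 1)) = (π * lam) ^ (-p) := by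
      nth_rewrite 1 [← Real.rpow_one (π * lam)]
      rw [← Real.rpow_add hpl]
      congr 1; ring
    rw [h1, add_comm 1 p]
    linear_combination (-(c) * β ^ (-(p + 1)) * Real.Gamma (p + 1)) * h2
  rw [← hval]
  exact key
end

section
/- Let M ≥ 1 be an integer, γ_r ≥ 0 and α > 2. Set γ_c = γ_r/(α/2 + 1) and x*_i = i^{−γ_c} / ∑_{j=1}^M j^{−γ_c} for i = 1, …, M. Then for every x ∈ ℝ^M with x_i > 0 for all i and ∑_{i=1}^M x_i = 1, one has ∑_{i=1}^M i^{−γ_r}·x_i^{−α/2} ≥ ∑_{i=1}^M i^{−γ_r}·(x*_i)^{−α/2}, with equality if and only if x = x*. In other words, when the request distribution is Zipf with exponent γ_r, the caching distribution minimizing the small-noise penalty term is Zipf with exponent γ_c = γ_r/(α/2+1). -/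
open Real Finset

lemma strictConvexOn_rpow_neg {β : ℝ} (hβ : 0 < β) :
    StrictConvexOn ℝ (Set.Ioi 0) fun t : ℝ => t ^ (-β) := by
  apply strictConvexOn_of_deriv2_pos (convex_Ioi 0)
  · exact ContinuousOn.rpow_const continuousOn_id fun y hy => Or.inl (ne_of_gt hy)
  · intro t ht
    rw [interior_Ioi] at ht
    have heq : Set.EqOn (deriv fun y : ℝ => y ^ (-β)) (fun y => -β * y ^ (-β - 1)) (Set.Ioi 0) :=
      fun y hy => (Real.hasDerivAt_rpow_const (Or.inl (ne_of_gt hy))).deriv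
    have h2 : deriv^[2] (fun y : ℝ => y ^ (-β)) t
        = deriv (fun y => -β * y ^ (-β - 1)) t := by
      simp only [Function.iterate_succ, Function.iterate_zero, Function.comp_apply, id]
      exact Filter.EventuallyEq.deriv_eq
        (Filter.eventuallyEq_of_mem (isOpen_Ioi.mem_nhds ht) heq)
    rw [h2, deriv_const_mul _ ((Real.hasDerivAt_rpow_const
      (Or.inl (ne_of_gt ht))).differentiableAt),
      (Real.hasDerivAt_rpow_const (p := -β - 1) (Or.inl (ne_of_gt ht))).deriv]
    have : (0:ℝ) < t ^ (-β - 1 - 1) := Real.rpow_pos_of_pos ht _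
    nlinarith [mul_pos (mul_pos hβ (by linarith : (0:ℝ) < β + 1)) this]

/-- For Zipf requests with exponent `γ_r`, the Zipf distribution with exponent
`γ_c = γ_r/(α/2+1)` is the unique minimizer of the small-noise penalty term
`∑ i^{−γ_r}·x_i^{−α/2}` over probability vectors `x` with positive entries. -/
theorem zipf_caching_optimal_small_noise
    (M : ℕ) (hM : 1 ≤ M) (γr α : ℝ) (hγr : 0 ≤ γr) (hα : 2 < α)
    (γc : ℝ) (hγc : γc = γr / (α / 2 + 1))
    (xstar : Fin M → ℝ)
    (hxstar : ∀ i, xstar i = ((i : ℕ) + 1 : ℝ) ^ (-γc) /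
      ∑ j : Fin M, ((j : ℕ) + 1 : ℝ) ^ (-γc))
    (x : Fin M → ℝ) (hx : ∀ i, 0 < x i) (hsum : ∑ i, x i = 1) :
    (∑ i : Fin M, ((i : ℕ) + 1 : ℝ) ^ (-γr) * xstar i ^ (-(α / 2)) ≤
      ∑ i : Fin M, ((i : ℕ) + 1 : ℝ) ^ (-γr) * x i ^ (-(α / 2))) ∧
    ((∑ i : Fin M, ((i : ℕ) + 1 : ℝ) ^ (-γr) * x i ^ (-(α / 2)) =
      ∑ i : Fin M, ((i : ℕ) + 1 : ℝ) ^ (-γr) * xstar i ^ (-(α / 2))) ↔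
      x = xstar) := by
  have hn : Nonempty (Fin M) := ⟨⟨0, hM⟩⟩
  set β : ℝ := α / 2 with hβdef
  have hβ1 : 1 < β := by rw [hβdef]; linarith
  have hβ0 : 0 < β := by linarith
  set S : ℝ := ∑ j : Fin M, ((j : ℕ) + 1 : ℝ) ^ (-γc) with hSdef
  have hbase : ∀ i : Fin M, (0:ℝ) < ((i : ℕ) + 1 : ℝ) ^ (-γc) := fun i =>
    Real.rpow_pos_of_pos (by positivity) _
  have hS : 0 < S := Finset.sum_pos (fun i _ => hbase i) univ_nonempty
  have hxs_pos : ∀ i, 0 < xstar i := fun i => by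
    rw [hxstar i]; exact div_pos (hbase i) hS
  have hxs_sum : ∑ i, xstar i = 1 := by
    simp only [hxstar]; rw [← Finset.sum_div, ← hSdef, div_self hS.ne']
  have hγ : γc * (β + 1) = γr := by
    rw [hγc, hβdef]; field_simp
  have hw : ∀ i : Fin M, ((i : ℕ) + 1 : ℝ) ^ (-γr) = (S * xstar i) ^ (β + 1) := by
    intro i
    have h1 : S * xstar i = ((i : ℕ) + 1 : ℝ) ^ (-γc) := by
      rw [hxstar i, mul_div_cancel₀ _ hS.ne']
    have h0 : (0:ℝ) ≤ ((i : ℕ) + 1 : ℝ) := by positivity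
    rw [h1, ← Real.rpow_mul h0, show -γc * (β + 1) = -γr by rw [← hγ]; ring]
  -- key identity
  have key : ∀ y : Fin M → ℝ, (∀ i, 0 < y i) →
      ∑ i : Fin M, ((i : ℕ) + 1 : ℝ) ^ (-γr) * y i ^ (-β)
        = S ^ (β + 1) * ∑ i : Fin M, xstar i * (y i / xstar i) ^ (-β) := by
    intro y hy
    rw [Finset.mul_sum]
    refine Finset.sum_congr rfl fun i _ => ?_
    rw [hw i, Real.mul_rpow hS.le (hxs_pos i).le,
      Real.div_rpow (hy i).le (hxs_pos i).le, Real.rpow_neg (hy i).le,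
      Real.rpow_neg (hxs_pos i).le,
      show β + 1 = β + 1 from rfl]
    have h2 : xstar i ^ (β + 1) = xstar i ^ β * xstar i := by
      rw [Real.rpow_add (hxs_pos i), Real.rpow_one]
    rw [h2]
    have h3 : (0:ℝ) < xstar i ^ β := Real.rpow_pos_of_pos (hxs_pos i) _
    have h4 : (0:ℝ) < x i ^ β := Real.rpow_pos_of_pos (hx i) _
    field_simp
  -- Jensen setup
  set p : Fin M → ℝ := fun i => x i / xstar i with hpdef
  have hpmem : ∀ i ∈ Finset.univ, p i ∈ Set.Ioi (0:ℝ) := fun i _ =>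
    div_pos (hx i) (hxs_pos i)
  have hw0 : ∀ i ∈ Finset.univ, (0:ℝ) < xstar i := fun i _ => hxs_pos i
  have hcenter : ∑ i, xstar i • p i = 1 := by
    rw [← hsum]
    refine Finset.sum_congr rfl fun i _ => ?_
    rw [smul_eq_mul, hpdef, mul_div_cancel₀ _ (hxs_pos i).ne']
  have hf := strictConvexOn_rpow_neg hβ0
  -- Jensen inequality
  have hjen : (1:ℝ) ≤ ∑ i, xstar i * (p i) ^ (-β) := by
    have := hf.convexOn.map_sum_le (t := Finset.univ) (w := xstar) (p := p)
      (fun i _ => (hxs_pos i).le) hxs_sum hpmem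
    rw [hcenter] at this
    simpa [Real.one_rpow] using this
  -- value at xstar
  have hstarval : ∑ i : Fin M, ((i : ℕ) + 1 : ℝ) ^ (-γr) * xstar i ^ (-β)
      = S ^ (β + 1) := by
    rw [key xstar hxs_pos]
    have : ∀ i : Fin M, xstar i * (xstar i / xstar i) ^ (-β) = xstar i := fun i => by
      rw [div_self (hxs_pos i).ne', Real.one_rpow, mul_one]
    rw [Finset.sum_congr rfl fun i _ => this i, hxs_sum, mul_one]
  have hxval : ∑ i : Fin M, ((i : ℕ) + 1 : ℝ) ^ (-γr) * x i ^ (-β)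
      = S ^ (β + 1) * ∑ i, xstar i * (p i) ^ (-β) := key x hx
  have hSpow : (0:ℝ) < S ^ (β + 1) := Real.rpow_pos_of_pos hS _
  constructor
  · rw [hstarval, hxval]
    nlinarith
  · constructor
    · intro heq
      rw [hstarval, hxval] at heq
      have hT : ∑ i, xstar i * (p i) ^ (-β) = 1 := by
        nth_rewrite 2 [← mul_one (S ^ (β + 1))] at heq
        exact mul_left_cancel₀ hSpow.ne' heq
      have := (hf.map_sum_eq_iff (t := Finset.univ) (w := xstar) (p := p)
        hw0 hxs_sum hpmem).mp ?_
      · funext i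
        have hi := this i (Finset.mem_univ i)
        rw [hcenter] at hi
        have : x i / xstar i = 1 := hi
        exact (div_eq_one_iff_eq (hxs_pos i).ne').mp this
      · rw [hcenter]
        simp only [smul_eq_mul]
        rw [hT, Real.one_rpow]
    · intro h; rw [h]
end

section
/- Let M ≥ 1 be an integer, α > 2, p ∈ (0,1), and let the request pmf be truncated geometric: q_i = (1−p)^{i−1}·p / ∑_{j=1}^M (1−p)^{j−1}·p for i = 1, …, M. Set q̃ = 1 − (1−p)^{1/(α/2+1)}. Then the unique minimizer of x ↦ ∑_{i=1}^M q_i·x_i^{−α/2} over probability vectors x ∈ ℝ^M with x_i > 0 and ∑ x_i = 1 is the truncated geometric pmf x*_i = (1−q̃)^{i−1} / ∑_{j=1}^M (1−q̃)^{j−1}. -/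
open Real Finset

lemma key_le {s u : ℝ} (hs : 1 ≤ s) (hu : 0 < u) :
    1 + s * (1 - u) ≤ u ^ (-s) := by
  have h1 : (0:ℝ) < 1/u := by positivity
  have hx : (-1:ℝ) ≤ 1/u - 1 := by linarith
  have hb : 1 + s * (1/u - 1) ≤ (1 + (1/u - 1)) ^ s :=
    one_add_mul_self_le_rpow_one_add hx hs
  have h2 : ((1:ℝ) + (1/u - 1)) ^ s = u ^ (-s) := by
    rw [show (1:ℝ) + (1/u - 1) = u⁻¹ by ring, Real.inv_rpow hu.le,
      ← Real.rpow_neg hu.le]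
  have h4 : 1/u - 1 - (1 - u) = (u-1)^2 / u := by field_simp; ring
  nlinarith [h2 ▸ hb, div_nonneg (sq_nonneg (u-1)) hu.le]

lemma key_lt {s u : ℝ} (hs : 1 < s) (hu : 0 < u) (hne : u ≠ 1) :
    1 + s * (1 - u) < u ^ (-s) := by
  have h1 : (0:ℝ) < 1/u := by positivity
  have hx : (-1:ℝ) ≤ 1/u - 1 := by linarith
  have hx0 : 1/u - 1 ≠ 0 := by
    intro h
    apply hne
    have h1u : 1/u = 1 := by linarith
    field_simp at h1u
    linarith
  have hb : 1 + s * (1/u - 1) < (1 + (1/u - 1)) ^ s :=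
    one_add_mul_self_lt_rpow_one_add hx hx0 hs
  have h2 : ((1:ℝ) + (1/u - 1)) ^ s = u ^ (-s) := by
    rw [show (1:ℝ) + (1/u - 1) = u⁻¹ by ring, Real.inv_rpow hu.le,
      ← Real.rpow_neg hu.le]
  have h4 : 1/u - 1 - (1 - u) = (u-1)^2 / u := by field_simp; ring
  nlinarith [h2 ▸ hb, div_nonneg (sq_nonneg (u-1)) hu.le]

lemma rpow_step {a s : ℝ} (ha : 0 < a) : a ^ (-(s+1)) * a = a ^ (-s) := by
  nth_rewrite 2 [← Real.rpow_one a]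
  rw [← Real.rpow_add ha]
  ring_nf

lemma tangent_le {s a t : ℝ} (hs : 1 < s) (ha : 0 < a) (ht : 0 < t) :
    a ^ (-s) - s * (a ^ (-(s+1)) * (t - a)) ≤ t ^ (-s) := by
  set u := t / a with hu_def
  have hu : 0 < u := div_pos ht ha
  have e1 : t = a * u := by rw [hu_def]; field_simp [ha.ne']
  have e2 : t ^ (-s) = a ^ (-s) * u ^ (-s) := by
    rw [e1, Real.mul_rpow ha.le hu.le]
  have e3 : a ^ (-(s+1)) * (t - a) = a ^ (-s) * (u - 1) := by
    calc a ^ (-(s+1)) * (t - a) = (a ^ (-(s+1)) * a) * (u - 1) := by rw [e1]; ring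
      _ = a ^ (-s) * (u - 1) := by rw [rpow_step ha]
  rw [e2, e3]
  nlinarith [key_le hs.le hu, Real.rpow_pos_of_pos ha (-s)]

lemma tangent_lt {s a t : ℝ} (hs : 1 < s) (ha : 0 < a) (ht : 0 < t) (hne : t ≠ a) :
    a ^ (-s) - s * (a ^ (-(s+1)) * (t - a)) < t ^ (-s) := by
  set u := t / a with hu_def
  have hu : 0 < u := div_pos ht ha
  have hu1 : u ≠ 1 := by
    intro h
    apply hne
    rw [hu_def, div_eq_one_iff_eq ha.ne'] at h
    exact h
  have e1 : t = a * u := by rw [hu_def]; field_simp [ha.ne']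
  have e2 : t ^ (-s) = a ^ (-s) * u ^ (-s) := by
    rw [e1, Real.mul_rpow ha.le hu.le]
  have e3 : a ^ (-(s+1)) * (t - a) = a ^ (-s) * (u - 1) := by
    calc a ^ (-(s+1)) * (t - a) = (a ^ (-(s+1)) * a) * (u - 1) := by rw [e1]; ring
      _ = a ^ (-s) * (u - 1) := by rw [rpow_step ha]
  rw [e2, e3]
  nlinarith [key_lt hs hu hu1, Real.rpow_pos_of_pos ha (-s)]

/-- If requests follow a truncated geometric pmf with parameter `p`, then the
unique minimizer of `∑ q_i·x_i^{−α/2}` over probability vectors with positive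
entries is the truncated geometric pmf with parameter
`q̃ = 1 − (1−p)^{1/(α/2+1)}`. -/
theorem geometric_caching_optimal
    (M : ℕ) (hM : 1 ≤ M) (α : ℝ) (hα : 2 < α)
    (p : ℝ) (hp : p ∈ Set.Ioo (0:ℝ) 1)
    (q : Fin M → ℝ)
    (hq : ∀ i, q i = (1 - p) ^ (i : ℕ) * p /
      ∑ j : Fin M, (1 - p) ^ (j : ℕ) * p)
    (qt : ℝ) (hqt : qt = 1 - (1 - p) ^ (1 / (α / 2 + 1)))
    (xstar : Fin M → ℝ)
    (hxstar : ∀ i, xstar i = (1 - qt) ^ (i : ℕ) /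
      ∑ j : Fin M, (1 - qt) ^ (j : ℕ))
    (x : Fin M → ℝ) (hx : ∀ i, 0 < x i) (hsum : ∑ i, x i = 1) :
    (∑ i : Fin M, q i * xstar i ^ (-(α / 2)) ≤
      ∑ i : Fin M, q i * x i ^ (-(α / 2))) ∧
    ((∑ i : Fin M, q i * x i ^ (-(α / 2)) =
      ∑ i : Fin M, q i * xstar i ^ (-(α / 2))) ↔ x = xstar) := by
  obtain ⟨hp0, hp1⟩ := hp
  have h1p : 0 < 1 - p := by linarith
  haveI : NeZero M := ⟨by omega⟩
  set s : ℝ := α / 2 with hs_def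
  have hs1 : 1 < s := by rw [hs_def]; linarith
  have hs1' : s + 1 ≠ 0 := by positivity
  set r : ℝ := (1 - p) ^ (1 / (s + 1)) with hr_def
  have hr0 : 0 < r := Real.rpow_pos_of_pos h1p _
  have hqt' : 1 - qt = r := by rw [hqt]; ring
  set S : ℝ := ∑ j : Fin M, r ^ (j : ℕ) with hS_def
  have hS : 0 < S := Finset.sum_pos (fun j _ => pow_pos hr0 _) univ_nonempty
  set T : ℝ := ∑ j : Fin M, (1 - p) ^ (j : ℕ) * p with hT_def
  have hT : 0 < T :=
    Finset.sum_pos (fun j _ => mul_pos (pow_pos h1p _) hp0) univ_nonempty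
  have hxs : ∀ i, xstar i = r ^ (i : ℕ) / S := by
    intro i; rw [hxstar i, hqt']
  have hxs_pos : ∀ i, 0 < xstar i := fun i => by
    rw [hxs i]; exact div_pos (pow_pos hr0 _) hS
  have hxs_sum : ∑ i, xstar i = 1 := by
    simp only [hxs]
    rw [← Finset.sum_div, ← hS_def, div_self hS.ne']
  have hq_pos : ∀ i, 0 < q i := fun i => by
    rw [hq i]; exact div_pos (mul_pos (pow_pos h1p _) hp0) hT
  -- key: q i * xstar i ^ (-(s+1)) is constant
  set c : ℝ := p / T * S ^ (s + 1) with hc_def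
  have hkey : ∀ i : Fin M, q i * xstar i ^ (-(s + 1)) = c := by
    intro i
    have hrpow : (r ^ (i : ℕ)) ^ (-(s + 1)) = (1 - p) ^ (-((i : ℕ) : ℝ)) := by
      rw [← Real.rpow_natCast r (i : ℕ), ← Real.rpow_mul h1p.le,
        ← Real.rpow_mul h1p.le]
      congr 1
      field_simp
    have hxsr : xstar i ^ (-(s + 1)) =
        (1 - p) ^ (-((i : ℕ) : ℝ)) * S ^ (s + 1) := by
      rw [hxs i, Real.div_rpow (by positivity) hS.le, hrpow,
        Real.rpow_neg hS.le, div_eq_mul_inv, inv_inv]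
    rw [hq i, hxsr, ← Real.rpow_natCast (1 - p) (i : ℕ), hc_def]
    have hmul : (1 - p) ^ ((i:ℕ):ℝ) * (1 - p) ^ (-((i:ℕ):ℝ)) = 1 := by
      rw [← Real.rpow_add h1p]; simp
    linear_combination (p * S ^ (s + 1) / T) * hmul
  have hterm_le : ∀ i : Fin M,
      q i * xstar i ^ (-s) - s * c * (x i - xstar i) ≤ q i * x i ^ (-s) := by
    intro i
    have ht := tangent_le hs1 (hxs_pos i) (hx i)
    have h2 := mul_le_mul_of_nonneg_left ht (hq_pos i).le
    calc q i * xstar i ^ (-s) - s * c * (x i - xstar i)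
        = q i * (xstar i ^ (-s) - s * (xstar i ^ (-(s+1)) * (x i - xstar i))) := by
          rw [← hkey i]; ring
      _ ≤ q i * x i ^ (-s) := h2
  have hterm_lt : ∀ i : Fin M, x i ≠ xstar i →
      q i * xstar i ^ (-s) - s * c * (x i - xstar i) < q i * x i ^ (-s) := by
    intro i hne
    have ht := tangent_lt hs1 (hxs_pos i) (hx i) hne
    have h2 := mul_lt_mul_of_pos_left ht (hq_pos i)
    calc q i * xstar i ^ (-s) - s * c * (x i - xstar i)
        = q i * (xstar i ^ (-s) - s * (xstar i ^ (-(s+1)) * (x i - xstar i))) := by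
          rw [← hkey i]; ring
      _ < q i * x i ^ (-s) := h2
  have hsum_g : ∑ i, (q i * xstar i ^ (-s) - s * c * (x i - xstar i))
      = ∑ i, q i * xstar i ^ (-s) := by
    rw [Finset.sum_sub_distrib, ← Finset.mul_sum, Finset.sum_sub_distrib, hsum, hxs_sum]
    ring
  constructor
  · calc ∑ i, q i * xstar i ^ (-s)
        = ∑ i, (q i * xstar i ^ (-s) - s * c * (x i - xstar i)) := hsum_g.symm
      _ ≤ ∑ i, q i * x i ^ (-s) := Finset.sum_le_sum (fun i _ => hterm_le i)
  · constructor
    · intro heq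
      by_contra hne
      obtain ⟨i0, hi0⟩ : ∃ i, x i ≠ xstar i := by
        by_contra h
        push_neg at h
        exact hne (funext h)
      have hlt : ∑ i, (q i * xstar i ^ (-s) - s * c * (x i - xstar i))
          < ∑ i, q i * x i ^ (-s) :=
        Finset.sum_lt_sum (fun i _ => hterm_le i)
          ⟨i0, Finset.mem_univ i0, hterm_lt i0 hi0⟩
      rw [hsum_g] at hlt
      linarith
    · intro h
      rw [h]
end

section
/- Let M ≥ 1 be an integer, γ_r > 0 and K > 0, and set b = γ_r/K. Assume b·(M·ln M − ln(M!)) ≤ 1. Define x*_i = 1/M + (b/M)·∑_{j=1}^M ln(j/i) for i = 1, …, M (equivalently, x*_i = a_i + b·ln((i+1)/i) with a_i = 1/M + (b/M)·∑_{j=1}^M ln(j/(i+1))). Then: (i) x*_i ≥ 0 for all i and ∑_{i=1}^M x*_i = 1, so x* is a pmf; and (ii) x* maximizes G(x) = ∑_{i=1}^M i^{−γ_r}·(1 − exp(−K·x_i)) over the simplex {x ∈ ℝ^M : x_i ≥ 0, ∑_{i=1}^M x_i = 1}. -/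
open Real Finset

/-- The Benford-type pmf `x*_i = 1/M + (b/M)·∑_j ln(j/i)` with `b = γ_r/K` is a
valid pmf when `b·(M·ln M − ln(M!)) ≤ 1`, and it maximizes
`G(x) = ∑ i^{−γ_r}·(1 − exp(−K·x_i))` over the probability simplex. -/
theorem benford_caching_optimal
    (M : ℕ) (hM : 1 ≤ M) (γr K b : ℝ) (hγr : 0 < γr) (hK : 0 < K)
    (hb : b = γr / K)
    (hcond : b * ((M : ℝ) * Real.log M - Real.log (Nat.factorial M)) ≤ 1)
    (xstar : Fin M → ℝ)
    (hxstar : ∀ i, xstar i = 1 / (M : ℝ) + (b / M) *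
      ∑ j : Fin M, Real.log (((j : ℕ) + 1 : ℝ) / ((i : ℕ) + 1 : ℝ))) :
    (∀ i, 0 ≤ xstar i) ∧ (∑ i, xstar i = 1) ∧
    (∀ x : Fin M → ℝ, (∀ i, 0 ≤ x i) → (∑ i, x i = 1) →
      ∑ i : Fin M, ((i : ℕ) + 1 : ℝ) ^ (-γr) * (1 - Real.exp (-(K * x i))) ≤
      ∑ i : Fin M, ((i : ℕ) + 1 : ℝ) ^ (-γr) *
        (1 - Real.exp (-(K * xstar i)))) := by
  have hMpos : (0:ℝ) < M := by exact_mod_cast hM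
  have hbnn : 0 ≤ b := by rw [hb]; positivity
  set LF : ℝ := ∑ j : Fin M, Real.log ((j : ℕ) + 1 : ℝ) with hLF
  -- rewrite xstar
  have hxs : ∀ i : Fin M, xstar i
      = 1 / M + (b / M) * (LF - M * Real.log ((i : ℕ) + 1 : ℝ)) := by
    intro i
    rw [hxstar i]
    congr 1
    congr 1
    have : ∀ j : Fin M, Real.log (((j : ℕ) + 1 : ℝ) / ((i : ℕ) + 1 : ℝ))
        = Real.log ((j : ℕ) + 1 : ℝ) - Real.log ((i : ℕ) + 1 : ℝ) := by
      intro j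
      apply Real.log_div <;> positivity
    rw [Finset.sum_congr rfl (fun j _ => this j), Finset.sum_sub_distrib,
      Finset.sum_const, Finset.card_univ, Fintype.card_fin, nsmul_eq_mul]
  -- log of factorial
  have hfact : Real.log (Nat.factorial M) = LF := by
    have h1 : ((Nat.factorial M : ℝ)) = ∏ j : Fin M, ((j : ℕ) + 1 : ℝ) := by
      rw [Fin.prod_univ_eq_prod_range (fun j => ((j : ℝ) + 1))]
      rw [← Finset.prod_range_add_one_eq_factorial M]
      push_cast
      ring
    rw [h1, Real.log_prod]
    intro j _
    positivity
  -- nonnegativity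
  have hnn : ∀ i, 0 ≤ xstar i := by
    intro i
    rw [hxs i]
    have hle : Real.log ((i : ℕ) + 1 : ℝ) ≤ Real.log M := by
      apply Real.log_le_log (by positivity)
      have := i.isLt
      exact_mod_cast Nat.succ_le_of_lt this
    have h2 : b * (M * Real.log M - LF) ≤ 1 := by rw [← hfact]; exact hcond
    have h3 : b * ((M : ℝ) * Real.log ((i : ℕ) + 1 : ℝ) - LF) ≤ 1 := by
      have hm : (M : ℝ) * Real.log ((i : ℕ) + 1 : ℝ) - LF ≤ (M : ℝ) * Real.log M - LF := by
        nlinarith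
      calc b * ((M : ℝ) * Real.log ((i : ℕ) + 1 : ℝ) - LF)
          ≤ b * ((M : ℝ) * Real.log M - LF) := mul_le_mul_of_nonneg_left hm hbnn
        _ ≤ 1 := h2
    have heq : 1 / (M : ℝ) + b / M * (LF - M * Real.log ((i : ℕ) + 1 : ℝ))
        = (1 - b * ((M : ℝ) * Real.log ((i : ℕ) + 1 : ℝ) - LF)) / M := by
      field_simp; ring
    rw [heq]
    exact div_nonneg (by linarith) hMpos.le
  -- sum = 1
  have hsum : ∑ i, xstar i = 1 := by
    have e : ∀ i : Fin M, xstar i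
        = (1 / M + (b / M) * LF) - b * Real.log ((i : ℕ) + 1 : ℝ) := by
      intro i; rw [hxs i]; field_simp; ring
    rw [Finset.sum_congr rfl (fun i _ => e i), Finset.sum_sub_distrib, Finset.sum_const,
      Finset.card_univ, Fintype.card_fin, nsmul_eq_mul, ← Finset.mul_sum, ← hLF]
    field_simp
    ring
  refine ⟨hnn, hsum, ?_⟩
  intro x hx hxsum
  -- constants
  set D : ℝ := K / M + (γr / M) * LF with hD
  set L : ℝ := Real.exp (-D) with hL2
  have hLpos : 0 < L := Real.exp_pos _
  have hKxs : ∀ i : Fin M, K * xstar i = D - γr * Real.log ((i : ℕ) + 1 : ℝ) := by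
    intro i
    rw [hxs i, hD, hb]
    field_simp
    ring
  have hci : ∀ i : Fin M, ((i : ℕ) + 1 : ℝ) ^ (-γr)
      = Real.exp (-(γr * Real.log ((i : ℕ) + 1 : ℝ))) := by
    intro i
    rw [Real.rpow_def_of_pos (by positivity)]
    ring_nf
  -- key per-term inequality
  have key : ∀ i : Fin M,
      ((i : ℕ) + 1 : ℝ) ^ (-γr) * (1 - Real.exp (-(K * x i)))
      ≤ ((i : ℕ) + 1 : ℝ) ^ (-γr) * (1 - Real.exp (-(K * xstar i)))
        + K * L * (x i - xstar i) := by
    intro i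
    have h1 : ((i : ℕ) + 1 : ℝ) ^ (-γr) * Real.exp (-(K * xstar i)) = L := by
      rw [hci i, hKxs i, ← Real.exp_add, hL2]
      ring_nf
    have h2 : ((i : ℕ) + 1 : ℝ) ^ (-γr) * Real.exp (-(K * x i))
        = L * Real.exp (-(K * (x i - xstar i))) := by
      rw [hci i, ← Real.exp_add, hL2, ← Real.exp_add]
      congr 1
      have := hKxs i
      ring_nf
      ring_nf at this
      linarith
    have h3 : 1 - K * (x i - xstar i) ≤ Real.exp (-(K * (x i - xstar i))) := by
      have := Real.add_one_le_exp (-(K * (x i - xstar i)))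
      linarith
    nlinarith [hLpos]
  calc ∑ i : Fin M, ((i : ℕ) + 1 : ℝ) ^ (-γr) * (1 - Real.exp (-(K * x i)))
      ≤ ∑ i : Fin M, (((i : ℕ) + 1 : ℝ) ^ (-γr) * (1 - Real.exp (-(K * xstar i)))
          + K * L * (x i - xstar i)) := Finset.sum_le_sum (fun i _ => key i)
    _ = ∑ i : Fin M, ((i : ℕ) + 1 : ℝ) ^ (-γr) * (1 - Real.exp (-(K * xstar i))) := by
        rw [Finset.sum_add_distrib, ← Finset.mul_sum, Finset.sum_sub_distrib, hxsum, hsum]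
        ring
end

section
/- Let a > 0, b > 0 and α > 2. Then the function f(λ) = πλ ∫₀^∞ exp(−πλ·a·r − b·r^{α/2}) dr is strictly increasing and strictly concave on (0, ∞). -/
open Real MeasureTheory Set Filter Topology

private lemma cov_ftc (b s c : ℝ) (hb : 0 < b) (hs : 1 < s) (hc : 0 < c) :
    IntegrableOn (fun r : ℝ => (c + b * s * r ^ (s - 1)) * Real.exp (-(c * r) - b * r ^ s))
      (Ioi 0) ∧
    ∫ r in Ioi (0:ℝ), (c + b * s * r ^ (s - 1)) * Real.exp (-(c * r) - b * r ^ s) = 1 := by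
  set g : ℝ → ℝ := fun r => -Real.exp (-(c * r) - b * r ^ s) with hg
  set g' : ℝ → ℝ := fun r => (c + b * s * r ^ (s - 1)) * Real.exp (-(c * r) - b * r ^ s) with hg'
  have hderiv : ∀ r ∈ Ioi (0:ℝ), HasDerivAt g (g' r) r := by
    intro r hr
    have h1 : HasDerivAt (fun x : ℝ => x ^ s) (s * r ^ (s - 1)) r :=
      Real.hasDerivAt_rpow_const (Or.inl (ne_of_gt hr))
    have h2 : HasDerivAt (fun x : ℝ => -(c * x) - b * x ^ s)
        (-c - b * (s * r ^ (s - 1))) r := by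
      have := ((hasDerivAt_id r).const_mul c).neg.sub (h1.const_mul b)
      rw [mul_one] at this
      exact this
    have h3 := (h2.exp).neg
    convert h3 using 1
    rfl
    rfl
    rfl
    simp only [hg']
    ring
  have hcont : ContinuousWithinAt g (Ici 0) 0 := by
    have : ContinuousOn g (Ici 0) := by
      apply ContinuousOn.neg
      apply ContinuousOn.rexp
      exact (continuousOn_const.mul continuousOn_id).neg.sub
        (continuousOn_const.mul (continuousOn_id.rpow_const fun x _ => Or.inr (by linarith)))
    exact this 0 self_mem_Ici
  have hpos : ∀ r ∈ Ioi (0:ℝ), 0 ≤ g' r := by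
    intro r hr
    have : 0 < r ^ (s - 1) := Real.rpow_pos_of_pos hr _
    have := Real.exp_pos (-(c * r) - b * r ^ s)
    positivity
  have htend : Tendsto g atTop (𝓝 0) := by
    have h1 : Tendsto (fun r : ℝ => -(c * r) - b * r ^ s) atTop atBot := by
      apply tendsto_atBot_mono' atTop (f₁ := fun r : ℝ => -(c * r))
      · filter_upwards [eventually_ge_atTop (0:ℝ)] with r hr
        have : 0 ≤ b * r ^ s := mul_nonneg hb.le (Real.rpow_nonneg hr _)
        linarith
      · exact tendsto_neg_atBot_iff.mpr ((tendsto_const_mul_atTop_of_pos hc).2 tendsto_id)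
    have := (Real.tendsto_exp_atBot.comp h1).neg
    simpa using this
  have key := integral_Ioi_of_hasDerivAt_of_nonneg hcont hderiv hpos htend
  have hint := integrableOn_Ioi_deriv_of_nonneg hcont hderiv hpos htend
  refine ⟨hint, ?_⟩
  rw [key]
  simp [hg, Real.zero_rpow (by positivity : s ≠ 0)]

private lemma cov_key (a b s : ℝ) (ha : 0 < a) (hb : 0 < b) (hs : 1 < s)
    {lam : ℝ} (hlam : 0 < lam) :
    IntegrableOn (fun r : ℝ =>
      (b * s * r ^ (s - 1) * Real.exp (-(b * r ^ s))) * Real.exp (-(π * lam * a * r)))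
      (Ioi 0) ∧
    π * lam * ∫ r in Ioi (0:ℝ), Real.exp (-(π * lam * a * r) - b * r ^ s)
      = (1 - ∫ r in Ioi (0:ℝ),
          (b * s * r ^ (s - 1) * Real.exp (-(b * r ^ s))) * Real.exp (-(π * lam * a * r))) / a := by
  have hc : 0 < π * lam * a := by positivity
  obtain ⟨hint, heq⟩ := cov_ftc b s (π * lam * a) hb hs hc
  have hE : IntegrableOn (fun r : ℝ => Real.exp (-(π * lam * a * r) - b * r ^ s)) (Ioi 0) := by
    have hmeas : AEStronglyMeasurable (fun r : ℝ => Real.exp (-(π * lam * a * r) - b * r ^ s))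
        (volume.restrict (Ioi 0)) := by
      refine ContinuousOn.aestronglyMeasurable ?_ measurableSet_Ioi
      apply ContinuousOn.rexp
      exact (continuousOn_const.mul continuousOn_id).neg.sub
        (continuousOn_const.mul (continuousOn_id.rpow_const fun x hx => Or.inl (ne_of_gt hx)))
    refine Integrable.mono (exp_neg_integrableOn_Ioi 0 hc) hmeas ?_
    filter_upwards [ae_restrict_mem measurableSet_Ioi] with r hr
    rw [Real.norm_eq_abs, Real.norm_eq_abs, abs_of_pos (Real.exp_pos _),
      abs_of_pos (Real.exp_pos _)]
    apply Real.exp_le_exp.2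
    have : 0 ≤ b * r ^ s := mul_nonneg hb.le (Real.rpow_nonneg (le_of_lt hr) _)
    have h2 : -(π * lam * a * r) = -(π * lam * a) * r := by ring
    rw [h2]
    linarith
  have hptw : ∀ r ∈ Ioi (0:ℝ),
      (π * lam * a + b * s * r ^ (s - 1)) * Real.exp (-(π * lam * a * r) - b * r ^ s)
        - (π * lam * a) * Real.exp (-(π * lam * a * r) - b * r ^ s)
      = (b * s * r ^ (s - 1) * Real.exp (-(b * r ^ s))) * Real.exp (-(π * lam * a * r)) := by
    intro r _
    rw [show -(π * lam * a * r) - b * r ^ s = -(b * r ^ s) + -(π * lam * a * r) by ring,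
      Real.exp_add]
    ring
  have hW : IntegrableOn (fun r : ℝ =>
      (b * s * r ^ (s - 1) * Real.exp (-(b * r ^ s))) * Real.exp (-(π * lam * a * r)))
      (Ioi 0) :=
    IntegrableOn.congr_fun (hint.sub (hE.const_mul (π * lam * a))) hptw measurableSet_Ioi
  refine ⟨hW, ?_⟩
  have hsplit : ∫ r in Ioi (0:ℝ),
      (b * s * r ^ (s - 1) * Real.exp (-(b * r ^ s))) * Real.exp (-(π * lam * a * r))
      = 1 - (π * lam * a) * ∫ r in Ioi (0:ℝ), Real.exp (-(π * lam * a * r) - b * r ^ s) := by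
    rw [← setIntegral_congr_fun measurableSet_Ioi hptw,
      integral_sub hint (hE.const_mul (π * lam * a)), heq, integral_const_mul]
  rw [hsplit]
  field_simp
  ring

private lemma cov_int_lt {φ ψ : ℝ → ℝ} (hφ : IntegrableOn φ (Ioi 0))
    (hψ : IntegrableOn ψ (Ioi 0)) (h : ∀ r ∈ Ioi (0:ℝ), φ r < ψ r) :
    ∫ r in Ioi (0:ℝ), φ r < ∫ r in Ioi (0:ℝ), ψ r := by
  have hsub : IntegrableOn (fun r => ψ r - φ r) (Ioi 0) := hψ.sub hφ
  have hpos : 0 < ∫ r in Ioi (0:ℝ), (ψ r - φ r) := by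
    refine (setIntegral_pos_iff_support_of_nonneg_ae ?_ hsub).2 ?_
    · filter_upwards [ae_restrict_mem measurableSet_Ioi] with r hr
      exact le_of_lt (sub_pos.2 (h r hr))
    · refine lt_of_lt_of_le ?_
        (measure_mono (s := Ioi (0:ℝ)) (fun r hr =>
          ⟨fun h0 => absurd h0 (ne_of_gt (sub_pos.2 (h r hr))), hr⟩))
      rw [Real.volume_Ioi]
      exact ENNReal.zero_lt_top
  have heq := integral_sub hψ hφ
  rw [heq] at hpos
  linarith

/-- The coverage probability `λ ↦ πλ ∫₀^∞ exp(−πλ·a·r − b·r^{α/2}) dr` is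
strictly increasing and strictly concave in the transmitter density on
`(0, ∞)`. -/
theorem coverage_strictMono_strictConcave
    (a b α : ℝ) (ha : 0 < a) (hb : 0 < b) (hα : 2 < α) :
    StrictMonoOn (fun lam : ℝ => π * lam * ∫ r in Ioi (0:ℝ),
      Real.exp (-(π * lam * a * r) - b * r ^ (α / 2))) (Ioi 0) ∧
    StrictConcaveOn ℝ (Ioi 0) (fun lam : ℝ => π * lam * ∫ r in Ioi (0:ℝ),
      Real.exp (-(π * lam * a * r) - b * r ^ (α / 2))) := by
  have hs : 1 < α / 2 := by linarith
  have key := fun {lam : ℝ} (hlam : 0 < lam) => cov_key a b (α / 2) ha hb hs hlam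
  have hwpos : ∀ r ∈ Ioi (0:ℝ),
      0 < b * (α / 2) * r ^ (α / 2 - 1) * Real.exp (-(b * r ^ (α / 2))) := by
    intro r hr
    have h1 : 0 < r ^ (α / 2 - 1) := Real.rpow_pos_of_pos hr _
    have h2 := Real.exp_pos (-(b * r ^ (α / 2)))
    have : (0:ℝ) < α / 2 := by linarith
    positivity
  constructor
  · intro x hx y hy hxy
    simp only
    rw [(key hx).2, (key hy).2]
    have hGlt : ∫ r in Ioi (0:ℝ),
        (b * (α/2) * r ^ (α/2 - 1) * Real.exp (-(b * r ^ (α/2)))) * Real.exp (-(π * y * a * r))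
        < ∫ r in Ioi (0:ℝ),
        (b * (α/2) * r ^ (α/2 - 1) * Real.exp (-(b * r ^ (α/2)))) * Real.exp (-(π * x * a * r)) := by
      refine cov_int_lt (key hy).1 (key hx).1 (fun r hr => ?_)
      refine mul_lt_mul_of_pos_left (Real.exp_lt_exp.2 ?_) (hwpos r hr)
      have hr' : (0:ℝ) < r := hr
      nlinarith [mul_pos (sub_pos.mpr hxy) (mul_pos (mul_pos pi_pos ha) hr')]
    gcongr
  · refine ⟨convex_Ioi 0, fun x hx y hy hxy p q hp hq hpq => ?_⟩
    have hz : (0:ℝ) < p * x + q * y := by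
      have hx' : (0:ℝ) < x := hx
      have hy' : (0:ℝ) < y := hy
      positivity
    simp only [smul_eq_mul]
    rw [(key hx).2, (key hy).2, (key hz).2]
    set Gx := ∫ r in Ioi (0:ℝ),
        (b * (α/2) * r ^ (α/2 - 1) * Real.exp (-(b * r ^ (α/2)))) * Real.exp (-(π * x * a * r))
      with hGx
    set Gy := ∫ r in Ioi (0:ℝ),
        (b * (α/2) * r ^ (α/2 - 1) * Real.exp (-(b * r ^ (α/2)))) * Real.exp (-(π * y * a * r))
      with hGy
    have hGz : ∫ r in Ioi (0:ℝ),
        (b * (α/2) * r ^ (α/2 - 1) * Real.exp (-(b * r ^ (α/2))))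
          * Real.exp (-(π * (p * x + q * y) * a * r))
        < p * Gx + q * Gy := by
      have hR : IntegrableOn (fun r : ℝ =>
          p * ((b * (α/2) * r ^ (α/2 - 1) * Real.exp (-(b * r ^ (α/2))))
              * Real.exp (-(π * x * a * r)))
          + q * ((b * (α/2) * r ^ (α/2 - 1) * Real.exp (-(b * r ^ (α/2))))
              * Real.exp (-(π * y * a * r)))) (Ioi 0) :=
        ((key hx).1.const_mul p).add ((key hy).1.const_mul q)
      have hlt := cov_int_lt (key hz).1 hR ?_
      · rw [integral_add ((key hx).1.const_mul p) ((key hy).1.const_mul q),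
          integral_const_mul, integral_const_mul] at hlt
        exact hlt
      · intro r hr
        have hr' : (0:ℝ) < r := hr
        have hAB : -(π * x * a * r) ≠ -(π * y * a * r) := by
          intro h
          apply hxy
          have h2 : x * (π * a * r) = y * (π * a * r) := by
            have := neg_injective h
            linarith
          exact mul_right_cancel₀ (by positivity) h2
        have hconv := strictConvexOn_exp.2 (mem_univ (-(π * x * a * r)))
          (mem_univ (-(π * y * a * r))) hAB hp hq hpq
        simp only [smul_eq_mul] at hconv
        have hrw : -(π * (p * x + q * y) * a * r)
            = p * -(π * x * a * r) + q * -(π * y * a * r) := by ring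
        rw [hrw]
        have := mul_lt_mul_of_pos_left hconv (hwpos r hr)
        calc (b * (α/2) * r ^ (α/2 - 1) * Real.exp (-(b * r ^ (α/2))))
              * Real.exp (p * -(π * x * a * r) + q * -(π * y * a * r))
            < (b * (α/2) * r ^ (α/2 - 1) * Real.exp (-(b * r ^ (α/2))))
              * (p * Real.exp (-(π * x * a * r)) + q * Real.exp (-(π * y * a * r))) := this
          _ = p * ((b * (α/2) * r ^ (α/2 - 1) * Real.exp (-(b * r ^ (α/2))))
                * Real.exp (-(π * x * a * r)))
              + q * ((b * (α/2) * r ^ (α/2 - 1) * Real.exp (-(b * r ^ (α/2))))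
                * Real.exp (-(π * y * a * r))) := by ring
    have hrw2 : p * ((1 - Gx) / a) + q * ((1 - Gy) / a)
        = (1 - (p * Gx + q * Gy)) / a := by
      have h0 : p * ((1 - Gx) / a) + q * ((1 - Gy) / a)
          = (p * (1 - Gx) + q * (1 - Gy)) / a := by ring
      rw [h0]
      congr 1
      linear_combination hpq
    rw [hrw2]
    gcongr
end

section
/- Let β, μ, T > 0, σ² > 0, α > 2 and λ_t > 0, and define P(ν) = πν ∫₀^∞ exp(−πνβr − μTσ²·r^{α/2}) dr for ν ≥ 0 (so P(0) = 0). Let M ≥ 2 and let p_r, p_c be pmfs on {1, …, M} such that p_r(i) > 0 for all i and p_r(1) > p_r(i) for all 2 ≤ i ≤ M. Then ∑_{i=1}^M p_r(i)·P(λ_t·p_c(i)) < P(λ_t·p_r(1)). -/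
open Real MeasureTheory Set Finset
open Filter Topology

namespace DSR

noncomputable def psi (c a s : ℝ) : ℝ := c * a * s ^ (a - 1) * Real.exp (-(c * s ^ a))

lemma cont_rpow {a : ℝ} (ha : 0 < a) : Continuous fun s : ℝ => s ^ a := by
  rw [continuous_iff_continuousAt]
  intro x
  exact Real.continuousAt_rpow_const x a (Or.inr ha.le)

lemma cont_psi {c a : ℝ} (ha : 1 < a) : Continuous (psi c a) := by
  unfold psi
  exact (continuous_const.mul (cont_rpow (by linarith))).mul
    ((continuous_const.mul (cont_rpow (by linarith))).neg.rexp)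

lemma psi_nonneg {c a : ℝ} (hc : 0 < c) (ha : 1 < a) {s : ℝ} (hs : 0 ≤ s) :
    0 ≤ psi c a s := by
  unfold psi
  positivity

lemma psi_pos {c a : ℝ} (hc : 0 < c) (ha : 1 < a) {s : ℝ} (hs : 0 < s) :
    0 < psi c a s := by
  unfold psi
  have : 0 < s ^ (a - 1) := Real.rpow_pos_of_pos hs _
  positivity

lemma hasDerivAt_negexp {c a : ℝ} (ha : 1 < a) {x : ℝ} (hx : 0 < x) :
    HasDerivAt (fun s : ℝ => -Real.exp (-(c * s ^ a))) (psi c a x) x := by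
  have h1 : HasDerivAt (fun s : ℝ => s ^ a) (a * x ^ (a - 1)) x :=
    Real.hasDerivAt_rpow_const (Or.inl hx.ne')
  have h3 := (((h1.const_mul c).neg).exp).neg
  refine HasDerivAt.congr_deriv h3 ?_
  unfold psi; simp only [Pi.neg_apply]; ring

lemma tendsto_exp_neg_rpow {c a : ℝ} (hc : 0 < c) (ha : 0 < a) :
    Tendsto (fun s : ℝ => Real.exp (-(c * s ^ a))) atTop (𝓝 0) := by
  apply Real.tendsto_exp_atBot.comp
  exact (tendsto_neg_atTop_atBot.comp ((tendsto_rpow_atTop ha).const_mul_atTop hc))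

lemma tendsto_exp_neg_lin {G : ℝ} (hG : 0 < G) :
    Tendsto (fun s : ℝ => Real.exp (-(G * s))) atTop (𝓝 0) := by
  apply Real.tendsto_exp_atBot.comp
  exact tendsto_neg_atTop_atBot.comp (tendsto_id.const_mul_atTop hG)

lemma psi_integrable {c a : ℝ} (hc : 0 < c) (ha : 1 < a) :
    IntegrableOn (psi c a) (Ioi 0) := by
  apply integrableOn_Ioi_deriv_of_nonneg
    (g := fun s : ℝ => -Real.exp (-(c * s ^ a))) (l := 0)
  · exact ((((continuous_const.mul (cont_rpow (by linarith))).neg.rexp).neg).continuousAt).continuousWithinAt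
  · exact fun x hx => hasDerivAt_negexp ha hx
  · exact fun x hx => psi_nonneg hc ha (le_of_lt hx)
  · simpa using (tendsto_exp_neg_rpow hc (by linarith : (0:ℝ) < a)).neg

lemma integrable_exp_both {c a : ℝ} (hc : 0 < c) (ha : 1 < a) {G : ℝ} (hG : 0 < G) :
    IntegrableOn (fun s : ℝ => Real.exp (-(G * s) - c * s ^ a)) (Ioi 0) := by
  apply Integrable.mono' (g := fun s : ℝ => Real.exp (-G * s))
    ((exp_neg_integrableOn_Ioi 0 hG))
  · exact (Continuous.aestronglyMeasurable (by
      exact ((continuous_const.mul continuous_id).neg.sub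
        (continuous_const.mul (cont_rpow (by linarith)))).rexp))
  · filter_upwards [ae_restrict_mem measurableSet_Ioi] with s hs
    rw [Real.norm_eq_abs, abs_of_pos (Real.exp_pos _)]
    apply Real.exp_le_exp.2
    have : 0 ≤ c * s ^ a := by
      have := Real.rpow_nonneg (le_of_lt (hs : (0:ℝ) < s)) a
      positivity
    nlinarith

lemma integrable_one_sub_mul_psi {c a : ℝ} (hc : 0 < c) (ha : 1 < a) (G : ℝ) (hG : 0 ≤ G) :
    IntegrableOn (fun s : ℝ => (1 - Real.exp (-(G * s))) * psi c a s) (Ioi 0) := by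
  apply Integrable.mono' (g := psi c a) (psi_integrable hc ha)
  · exact (Continuous.aestronglyMeasurable (by
      exact ((continuous_const.sub ((continuous_const.mul continuous_id).neg.rexp)).mul
        (cont_psi ha))))
  · filter_upwards [ae_restrict_mem measurableSet_Ioi] with s hs
    have hs0 : (0:ℝ) < s := hs
    have h1 : Real.exp (-(G * s)) ≤ 1 := by
      apply Real.exp_le_one_iff.2; nlinarith
    have h0 : 0 < Real.exp (-(G * s)) := Real.exp_pos _
    have hψ := psi_nonneg hc ha hs0.le
    rw [Real.norm_eq_abs, abs_of_nonneg (by nlinarith)]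
    nlinarith

lemma repr_eq {c a : ℝ} (hc : 0 < c) (ha : 1 < a) {G : ℝ} (hG : 0 < G) :
    G * ∫ s in Ioi (0:ℝ), Real.exp (-(G * s) - c * s ^ a)
      = ∫ s in Ioi (0:ℝ), (1 - Real.exp (-(G * s))) * psi c a s := by
  set f : ℝ → ℝ := fun s => (1 - Real.exp (-(G * s))) * Real.exp (-(c * s ^ a)) with hf
  set f' : ℝ → ℝ := fun s =>
    G * Real.exp (-(G * s) - c * s ^ a) - (1 - Real.exp (-(G * s))) * psi c a s with hf'
  have hderiv : ∀ x ∈ Ioi (0:ℝ), HasDerivAt f (f' x) x := by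
    intro x hx
    have h1 : HasDerivAt (fun s : ℝ => 1 - Real.exp (-(G * s)))
        (G * Real.exp (-(G * x))) x := by
      have : HasDerivAt (fun s : ℝ => -(G * s)) (-G) x := by
        simpa using ((hasDerivAt_id x).const_mul G).fun_neg
      simpa [mul_comm] using (this.exp).const_sub 1
    have h2 : HasDerivAt (fun s : ℝ => Real.exp (-(c * s ^ a))) (-psi c a x) x := by
      simpa using (hasDerivAt_negexp (c := c) ha (hx : (0:ℝ) < x)).fun_neg
    have := h1.fun_mul h2
    refine HasDerivAt.congr_deriv this ?_
    show _ = G * Real.exp (-(G * x) - c * x ^ a) - (1 - Real.exp (-(G * x))) * psi c a x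
    have hexp : Real.exp (-(G * x) - c * x ^ a) = Real.exp (-(G*x)) * Real.exp (-(c*x^a)) := by
      rw [← Real.exp_add]; ring_nf
    rw [hexp]
    ring
  have hcont : ContinuousWithinAt f (Ici 0) 0 := by
    apply Continuous.continuousWithinAt
    exact ((continuous_const.sub ((continuous_const.mul continuous_id).neg.rexp)).mul
      ((continuous_const.mul (cont_rpow (by linarith))).neg.rexp))
  have hint1 := (integrable_exp_both hc ha hG).const_mul G
  have hint2 := integrable_one_sub_mul_psi hc ha G hG.le
  have hf'int : IntegrableOn f' (Ioi 0) := hint1.sub hint2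
  have htend : Tendsto f atTop (𝓝 0) := by
    have := (tendsto_const_nhds (x := (1:ℝ)) (f := atTop)).sub (tendsto_exp_neg_lin hG)
    have h2 := (this.mul (tendsto_exp_neg_rpow hc (by linarith : (0:ℝ) < a)))
    simpa using h2
  have key := integral_Ioi_of_hasDerivAt_of_tendsto hcont hderiv hf'int htend
  have hf0 : f 0 = 0 := by simp [hf]
  rw [hf0, sub_zero] at key
  have hsub := MeasureTheory.integral_sub hint1 hint2
  rw [show (fun s => f' s) = fun s => G * Real.exp (-(G * s) - c * s ^ a)
      - (1 - Real.exp (-(G * s))) * psi c a s from rfl] at key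
  rw [hsub] at key
  rw [MeasureTheory.integral_const_mul] at key
  linarith

lemma tangent (C y z : ℝ) : 1 - Real.exp (-(C * z))
    ≤ 1 - Real.exp (-(C * y)) + Real.exp (-(C * y)) * (C * z - C * y) := by
  have h1 : (C * y - C * z) + 1 ≤ Real.exp (C * y - C * z) := Real.add_one_le_exp _
  have h2 : Real.exp (C * y - C * z) * Real.exp (-(C * y)) = Real.exp (-(C * z)) := by
    rw [← Real.exp_add]; ring_nf
  nlinarith [Real.exp_pos (-(C * y))]

lemma tangent_strict {C y z : ℝ} (h : C * z ≠ C * y) : 1 - Real.exp (-(C * z))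
    < 1 - Real.exp (-(C * y)) + Real.exp (-(C * y)) * (C * z - C * y) := by
  have h1 : (C * y - C * z) + 1 < Real.exp (C * y - C * z) :=
    Real.add_one_lt_exp (by intro h0; apply h; linarith [sub_eq_zero.mp h0])
  have h2 : Real.exp (C * y - C * z) * Real.exp (-(C * y)) = Real.exp (-(C * z)) := by
    rw [← Real.exp_add]; ring_nf
  nlinarith [Real.exp_pos (-(C * y))]

lemma tangent_sum {n : ℕ} (w x : Fin n → ℝ) (y C : ℝ) (hC : 0 < C)
    (hw : ∀ i, 0 < w i) (hwsum : ∑ i, w i = 1)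
    (hxy : ∑ i, w i * x i ≤ y)
    (j : Fin n) (hj : x j ≠ y) :
    ∑ i, w i * (1 - Real.exp (-(C * x i))) < 1 - Real.exp (-(C * y)) := by
  set A := 1 - Real.exp (-(C * y)) with hA
  set B := Real.exp (-(C * y)) with hB
  have hBpos : 0 < B := Real.exp_pos _
  have step1 : ∑ i, w i * (1 - Real.exp (-(C * x i)))
      < ∑ i, w i * (A + B * (C * x i - C * y)) := by
    apply Finset.sum_lt_sum
    · intro i _
      have := tangent C y (x i)
      nlinarith [hw i]
    · refine ⟨j, Finset.mem_univ j, ?_⟩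
      have := tangent_strict (C := C) (y := y) (z := x j)
        (by intro h0; exact hj (mul_left_cancel₀ hC.ne' h0))
      nlinarith [hw j]
  have step2 : ∑ i, w i * (A + B * (C * x i - C * y))
      = A + B * C * ((∑ i, w i * x i) - y) := by
    have expand : ∀ i, w i * (A + B * (C * x i - C * y))
        = A * w i + (B * C) * (w i * x i) - (B * C * y) * w i := by
      intro i; ring
    rw [Finset.sum_congr rfl (fun i _ => expand i)]
    rw [Finset.sum_sub_distrib, Finset.sum_add_distrib, ← Finset.mul_sum, ← Finset.mul_sum,
      ← Finset.mul_sum, hwsum]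
    ring
  have step3 : A + B * C * ((∑ i, w i * x i) - y) ≤ A := by
    have h := mul_le_mul_of_nonneg_left (sub_nonpos.mpr hxy) (le_of_lt (mul_pos hBpos hC))
    rw [mul_zero] at h
    nlinarith
  linarith

end DSR

/-- Upper bound on the density of successful receptions of the sequential
model: if file 1 is strictly the most popular, then
`∑ p_r(i)·P(λ_t·p_c(i)) < P(λ_t·p_r(1))`. -/
theorem dsr_sequential_upper_bound
    (β μ T σ2 α lamt : ℝ) (hβ : 0 < β) (hμ : 0 < μ) (hT : 0 < T)
    (hσ2 : 0 < σ2) (hα : 2 < α) (hlamt : 0 < lamt)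
    (P : ℝ → ℝ)
    (hP : ∀ ν, P ν = π * ν * ∫ r in Ioi (0:ℝ),
      Real.exp (-(π * ν * β * r) - μ * T * σ2 * r ^ (α / 2)))
    (M : ℕ) (hM : 2 ≤ M)
    (pr pc : Fin M → ℝ)
    (hpr_pos : ∀ i, 0 < pr i) (hpr_sum : ∑ i, pr i = 1)
    (hpc_nonneg : ∀ i, 0 ≤ pc i) (hpc_sum : ∑ i, pc i = 1)
    (hmax : ∀ i : Fin M, i ≠ ⟨0, by omega⟩ → pr i < pr ⟨0, by omega⟩) :
    ∑ i, pr i * P (lamt * pc i) < P (lamt * pr ⟨0, by omega⟩) := by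
  have hπ : (0:ℝ) < π := Real.pi_pos
  set i0 : Fin M := ⟨0, by omega⟩ with hi0
  set c : ℝ := μ * T * σ2 with hcdef
  set a : ℝ := α / 2 with hadef
  have hc : 0 < c := by positivity
  have ha : 1 < a := by rw [hadef]; linarith
  set K : ℝ := π * lamt * β with hKdef
  have hK : 0 < K := by positivity
  -- integral representation of P
  have hrepr : ∀ t : ℝ, 0 ≤ t → P (lamt * t)
      = β⁻¹ * ∫ s in Ioi (0:ℝ), (1 - Real.exp (-(K * t * s))) * DSR.psi c a s := by
    intro t ht
    rcases eq_or_lt_of_le ht with h0 | h0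
    · rw [← h0, hP]
      simp
    · have hG : 0 < K * t := mul_pos hK h0
      rw [hP]
      have hiarg : (fun r : ℝ => Real.exp (-(π * (lamt * t) * β * r) - c * r ^ a))
          = fun r : ℝ => Real.exp (-(K * t * r) - c * r ^ a) := by
        funext r
        congr 2
        rw [hKdef]; ring
      rw [hiarg]
      have hcoef : π * (lamt * t) = β⁻¹ * (K * t) := by
        rw [hKdef]; field_simp
      rw [hcoef, mul_assoc, DSR.repr_eq hc ha hG]
  -- rewrite goal
  rw [hrepr (pr i0) (hpr_pos i0).le,
    Finset.sum_congr rfl (fun i _ => by rw [hrepr (pc i) (hpc_nonneg i)])]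
  have hsplit : ∑ i, pr i * (β⁻¹ * ∫ s in Ioi (0:ℝ),
        (1 - Real.exp (-(K * pc i * s))) * DSR.psi c a s)
      = β⁻¹ * ∑ i, pr i * ∫ s in Ioi (0:ℝ),
        (1 - Real.exp (-(K * pc i * s))) * DSR.psi c a s := by
    rw [Finset.mul_sum]
    exact Finset.sum_congr rfl fun i _ => by ring
  rw [hsplit]
  have hβinv : (0:ℝ) < β⁻¹ := by positivity
  apply mul_lt_mul_of_pos_left _ hβinv
  -- integrability
  have hint : ∀ t : ℝ, 0 ≤ t → IntegrableOn
      (fun s : ℝ => (1 - Real.exp (-(K * t * s))) * DSR.psi c a s) (Ioi 0) := by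
    intro t ht
    exact DSR.integrable_one_sub_mul_psi hc ha (K * t) (by positivity)
  have hint_i : ∀ i : Fin M, IntegrableOn
      (fun s : ℝ => pr i * ((1 - Real.exp (-(K * pc i * s))) * DSR.psi c a s)) (Ioi 0) :=
    fun i => (hint (pc i) (hpc_nonneg i)).const_mul (pr i)
  have hint_sum : IntegrableOn
      (fun s : ℝ => ∑ i, pr i * ((1 - Real.exp (-(K * pc i * s))) * DSR.psi c a s)) (Ioi 0) :=
    MeasureTheory.integrable_finset_sum _ (fun i _ => hint_i i)
  have hsum_int : ∑ i, pr i * ∫ s in Ioi (0:ℝ),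
        (1 - Real.exp (-(K * pc i * s))) * DSR.psi c a s
      = ∫ s in Ioi (0:ℝ), ∑ i, pr i * ((1 - Real.exp (-(K * pc i * s))) * DSR.psi c a s) := by
    rw [MeasureTheory.integral_finset_sum _ (fun i _ => hint_i i)]
    exact Finset.sum_congr rfl fun i _ => (MeasureTheory.integral_const_mul _ _).symm
  rw [hsum_int]
  -- pointwise strict inequality
  have prle : ∀ i, pr i ≤ pr i0 := by
    intro i
    by_cases h : i = i0
    · rw [h]
    · exact (hmax i h).le
  have hxy : ∑ i, pr i * pc i ≤ pr i0 := by
    calc ∑ i, pr i * pc i ≤ ∑ i, pr i0 * pc i :=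
          Finset.sum_le_sum fun i _ => mul_le_mul_of_nonneg_right (prle i) (hpc_nonneg i)
      _ = pr i0 * ∑ i, pc i := by rw [Finset.mul_sum]
      _ = pr i0 := by rw [hpc_sum, mul_one]
  have hwitness : ∃ j : Fin M, pc j ≠ pr i0 := by
    by_contra hno
    push_neg at hno
    have h1 : (∑ i : Fin M, pc i) = M * pr i0 := by
      rw [Finset.sum_congr rfl (fun i _ => hno i)]
      simp [Finset.card_univ, mul_comm]
    have hi1 : (⟨1, by omega⟩ : Fin M) ≠ i0 := by
      rw [hi0]
      simp [Fin.ext_iff]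
    have h2 : (∑ i : Fin M, pr i) < ∑ i : Fin M, pr i0 := by
      apply Finset.sum_lt_sum (fun i _ => prle i)
      exact ⟨_, Finset.mem_univ _, hmax _ hi1⟩
    have h3 : (∑ i : Fin M, pr i0 : ℝ) = M * pr i0 := by
      simp [Finset.card_univ, mul_comm]
    rw [hpr_sum, h3, ← h1, hpc_sum] at h2
    exact lt_irrefl _ h2
  obtain ⟨j, hj⟩ := hwitness
  -- set up positivity of the difference
  set D : ℝ → ℝ := fun s => (1 - Real.exp (-(K * pr i0 * s))) * DSR.psi c a s
      - ∑ i, pr i * ((1 - Real.exp (-(K * pc i * s))) * DSR.psi c a s) with hD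
  have hDint : IntegrableOn D (Ioi 0) := (hint (pr i0) (hpr_pos i0).le).sub hint_sum
  have hDpos : ∀ s ∈ Ioi (0:ℝ), 0 < D s := by
    intro s hs
    have hs0 : (0:ℝ) < s := hs
    have hψ : 0 < DSR.psi c a s := DSR.psi_pos hc ha hs0
    have main := DSR.tangent_sum pr pc (pr i0) (K * s) (by positivity) hpr_pos hpr_sum hxy j hj
    have e1 : ∀ i, K * s * pc i = K * pc i * s := fun i => by ring
    have e2 : K * s * pr i0 = K * pr i0 * s := by ring
    simp only [e1, e2] at main
    have hre : ∑ i, pr i * ((1 - Real.exp (-(K * pc i * s))) * DSR.psi c a s)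
        = (∑ i, pr i * (1 - Real.exp (-(K * pc i * s)))) * DSR.psi c a s := by
      rw [Finset.sum_mul]
      exact Finset.sum_congr rfl fun i _ => by ring
    rw [hD]
    simp only [hre]
    nlinarith
  have hpos : 0 < ∫ s in Ioi (0:ℝ), D s := by
    rw [MeasureTheory.setIntegral_pos_iff_support_of_nonneg_ae ?_ hDint]
    · apply lt_of_lt_of_le (b := volume (Ioi (0:ℝ)))
      · simp [Real.volume_Ioi]
      · exact measure_mono (fun s hs => ⟨ne_of_gt (hDpos s hs), hs⟩)
    · filter_upwards [ae_restrict_mem measurableSet_Ioi] with s hs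
      exact (hDpos s hs).le
  have hsub : ∫ s in Ioi (0:ℝ), D s
      = (∫ s in Ioi (0:ℝ), (1 - Real.exp (-(K * pr i0 * s))) * DSR.psi c a s)
        - ∫ s in Ioi (0:ℝ), ∑ i, pr i * ((1 - Real.exp (-(K * pc i * s))) * DSR.psi c a s) :=
    MeasureTheory.integral_sub (hint (pr i0) (hpr_pos i0).le) hint_sum
  rw [hsub] at hpos
  linarith
end

section
/- Let T > 0, σ² > 0, λ_t > 0 and p ∈ (0, 1]. Define ρ₁(T) = √T·∫_{1/√T}^∞ (1+u²)^{−1} du, ρ₂(T) = √T·∫₀^{1/√T} (1+u²)^{−1} du, and H = (p/√T − p·arctan(1/√T) + π/2) · πλ_t/√(2σ²). Then πλ_t·p · ∫₀^∞ exp( −πλ_t·p·v·(1−ρ₂(T)) − πλ_t·v·(ρ₁(T)+ρ₂(T)) − T·σ²·v² ) dv = πλ_t·p · √(π/(Tσ²)) · exp(H²/2) · Q(H), where Q(x) = (1/√(2π)) ∫ₓ^∞ exp(−y²/2) dy is the standard Gaussian tail probability. -/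
open Real MeasureTheory Set

lemma integral_Ioi_shift (H : ℝ) (f : ℝ → ℝ) :
    ∫ x in Ioi (0:ℝ), f (x + H) = ∫ y in Ioi H, f y := by
  rw [← integral_indicator measurableSet_Ioi, ← integral_indicator measurableSet_Ioi,
    ← integral_add_right_eq_self ((Ioi H).indicator f) H]
  congr 1
  ext x
  simp only [Set.indicator_apply, mem_Ioi]
  by_cases h : 0 < x
  · rw [if_pos h, if_pos (by linarith)]
  · rw [if_neg h, if_neg (by intro hh; exact h (by linarith))]

lemma gauss_sub_integral (c H : ℝ) (hc : 0 < c) :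
    ∫ x in Ioi (0:ℝ), Real.exp (-(c * x + H) ^ 2 / 2) =
      c⁻¹ * ∫ y in Ioi H, Real.exp (-y ^ 2 / 2) := by
  have h1 : ∫ x in Ioi (0:ℝ), Real.exp (-(c * x + H) ^ 2 / 2) =
      c⁻¹ • ∫ x in Ioi (c * 0), Real.exp (-(x + H) ^ 2 / 2) :=
    integral_comp_mul_left_Ioi (fun y => Real.exp (-(y + H) ^ 2 / 2)) 0 hc
  rw [h1, mul_zero, smul_eq_mul]
  congr 1
  have := integral_Ioi_shift H (fun y => Real.exp (-y ^ 2 / 2))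
  simpa using this

/-- The standard Gaussian tail probability `Q(x) = (1/√(2π)) ∫ₓ^∞ e^{−y²/2} dy`. -/
noncomputable def gaussQ (x : ℝ) : ℝ :=
  (Real.sqrt (2 * π))⁻¹ * ∫ y in Ioi x, Real.exp (-y ^ 2 / 2)

/-- Closed-form coverage probability of a typical receiver in the simultaneous
multi-file model with Rayleigh fading (`μ = 1`) and path-loss exponent `α = 4`. -/
theorem simultaneous_coverage_closed_form_alpha_four
    (T σ2 lamt p : ℝ) (hT : 0 < T) (hσ2 : 0 < σ2) (hlamt : 0 < lamt)
    (hp : 0 < p) (hp1 : p ≤ 1)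
    (ρ₁ ρ₂ H : ℝ)
    (hρ₁ : ρ₁ = Real.sqrt T *
      ∫ u in Ioi (1 / Real.sqrt T), (1 + u ^ 2)⁻¹)
    (hρ₂ : ρ₂ = Real.sqrt T *
      ∫ u in (0:ℝ)..(1 / Real.sqrt T), (1 + u ^ 2)⁻¹)
    (hH : H = (p / Real.sqrt T - p * Real.arctan (1 / Real.sqrt T) + π / 2) *
      (π * lamt / Real.sqrt (2 * σ2))) :
    π * lamt * p * ∫ v in Ioi (0:ℝ),
        Real.exp (-(π * lamt * p * v * (1 - ρ₂)) -
          π * lamt * v * (ρ₁ + ρ₂) - T * σ2 * v ^ 2) =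
      π * lamt * p * Real.sqrt (π / (T * σ2)) *
        Real.exp (H ^ 2 / 2) * gaussQ H := by
  have hsT : (0:ℝ) < Real.sqrt T := Real.sqrt_pos.mpr hT
  have hsT2 : Real.sqrt T ^ 2 = T := Real.sq_sqrt hT.le
  -- closed forms for ρ₁, ρ₂
  have hρ₁' : ρ₁ = Real.sqrt T * (π / 2 - Real.arctan (1 / Real.sqrt T)) := by
    rw [hρ₁, integral_Ioi_inv_one_add_sq]
  have hρ₂' : ρ₂ = Real.sqrt T * Real.arctan (1 / Real.sqrt T) := by
    rw [hρ₂, integral_inv_one_add_sq, Real.arctan_zero, sub_zero]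
  set b : ℝ := T * σ2 with hb
  have hbpos : (0:ℝ) < b := mul_pos hT hσ2
  set c : ℝ := Real.sqrt (2 * b) with hc
  have hcpos : (0:ℝ) < c := Real.sqrt_pos.mpr (by positivity)
  have hc2 : c ^ 2 = 2 * b := Real.sq_sqrt (by positivity)
  set a : ℝ := π * lamt * p * (1 - ρ₂) + π * lamt * (ρ₁ + ρ₂) with ha
  -- key algebraic identity : c * H = a
  have hca : c * H = a := by
    have hsplit : c = Real.sqrt T * Real.sqrt (2 * σ2) := by
      rw [hc, hb, ← Real.sqrt_mul hT.le]
      ring_nf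
    have hs2σ : (0:ℝ) < Real.sqrt (2 * σ2) := Real.sqrt_pos.mpr (by positivity)
    rw [hsplit, hH, ha, hρ₁', hρ₂']
    field_simp
    ring
  -- pointwise rewrite of the integrand
  have hpt : ∀ v : ℝ,
      Real.exp (-(π * lamt * p * v * (1 - ρ₂)) - π * lamt * v * (ρ₁ + ρ₂) - T * σ2 * v ^ 2)
        = Real.exp (H ^ 2 / 2) * Real.exp (-(c * v + H) ^ 2 / 2) := by
    intro v
    rw [← Real.exp_add]
    congr 1
    have : (c * v + H) ^ 2 = c ^ 2 * v ^ 2 + 2 * (c * H) * v + H ^ 2 := by ring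
    rw [this, hc2, hca, ha, hb]
    ring
  simp only [hb, hpt]
  rw [MeasureTheory.integral_const_mul, gauss_sub_integral c H hcpos, gaussQ]
  have hsqrt : Real.sqrt (π / (T * σ2)) = Real.sqrt (2 * π) * c⁻¹ := by
    rw [hc, hb, ← Real.sqrt_inv, ← Real.sqrt_mul (by positivity)]
    congr 1
    field_simp
  rw [hsqrt]
  have h2π : (0:ℝ) < Real.sqrt (2 * π) := Real.sqrt_pos.mpr (by positivity)
  field_simp
end

section
/- Let λ, β > 0, α > 0 and d ≥ 0. Then πλ ∫₀^∞ exp(−πλβr − d·r^{α/2}) dr ≤ 1/β, with equality if and only if d = 0. In particular, in the no-noise case (d = 0) the coverage probability equals β^{−1}, independently of the transmitter density λ, and for positive noise (d > 0) the coverage probability is strictly smaller than β^{−1}. -/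
open Real MeasureTheory Set
set_option maxHeartbeats 2000000

lemma integral_exp_neg_mul_Ioi_zero {b : ℝ} (hb : 0 < b) :
    ∫ x in Ioi (0:ℝ), Real.exp (-(b * x)) = 1 / b := by
  have h := integral_exp_neg_mul_rpow (p := 1) (b := b) one_pos hb
  norm_num [Real.Gamma_two] at h
  rw [h, Real.rpow_neg_one, one_div]

/-- The coverage probability `πλ ∫₀^∞ exp(−πλβr − d·r^{α/2}) dr` is at most
`1/β`, with equality if and only if the noise term `d` vanishes. -/
theorem coverage_le_no_noise
    (lam β α d : ℝ) (hlam : 0 < lam) (hβ : 0 < β) (hα : 0 < α) (hd : 0 ≤ d) :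
    (π * lam * ∫ r in Ioi (0:ℝ),
        Real.exp (-(π * lam * β * r) - d * r ^ (α / 2)) ≤ 1 / β) ∧
    ((π * lam * ∫ r in Ioi (0:ℝ),
        Real.exp (-(π * lam * β * r) - d * r ^ (α / 2)) = 1 / β) ↔ d = 0) := by
  have hπ : (0:ℝ) < π := Real.pi_pos
  have hc : 0 < π * lam * β := by positivity
  have hpl : 0 < π * lam := by positivity
  -- integrability of the dominating function
  have hint_g : IntegrableOn (fun r : ℝ => Real.exp (-(π * lam * β * r))) (Ioi 0) := by
    simpa [neg_mul, mul_comm, mul_assoc] using exp_neg_integrableOn_Ioi 0 hc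
  -- pointwise bound
  have hle : ∀ r ∈ Ioi (0:ℝ),
      Real.exp (-(π * lam * β * r) - d * r ^ (α / 2)) ≤ Real.exp (-(π * lam * β * r)) := by
    intro r hr
    apply Real.exp_le_exp.mpr
    have : 0 ≤ d * r ^ (α / 2) := by
      apply mul_nonneg hd (Real.rpow_nonneg (le_of_lt hr) _)
    linarith
  have hcont : Continuous (fun r : ℝ =>
      Real.exp (-(π * lam * β * r) - d * r ^ (α / 2))) := by
    have h2 : (0:ℝ) ≤ α / 2 := by linarith
    exact (((continuous_const.mul continuous_id).neg.sub
      (continuous_const.mul (Real.continuous_rpow_const h2))).rexp)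
  have hint_f : IntegrableOn (fun r : ℝ =>
      Real.exp (-(π * lam * β * r) - d * r ^ (α / 2))) (Ioi 0) := by
    refine Integrable.mono hint_g (hcont.measurable.aestronglyMeasurable) ?_
    filter_upwards [ae_restrict_mem measurableSet_Ioi] with r hr
    rw [Real.norm_eq_abs, Real.norm_eq_abs, abs_of_pos (Real.exp_pos _),
      abs_of_pos (Real.exp_pos _)]
    exact hle r hr
  have hgint : ∫ r in Ioi (0:ℝ), Real.exp (-(π * lam * β * r)) = 1 / (π * lam * β) :=
    integral_exp_neg_mul_Ioi_zero hc
  have hIle : (∫ r in Ioi (0:ℝ), Real.exp (-(π * lam * β * r) - d * r ^ (α / 2)))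
      ≤ 1 / (π * lam * β) := by
    rw [← hgint]
    exact setIntegral_mono_on hint_f hint_g measurableSet_Ioi hle
  have key : π * lam * (1 / (π * lam * β)) = 1 / β := by
    field_simp
  constructor
  · calc π * lam * ∫ r in Ioi (0:ℝ), Real.exp (-(π * lam * β * r) - d * r ^ (α / 2))
        ≤ π * lam * (1 / (π * lam * β)) := by
          exact mul_le_mul_of_nonneg_left hIle (le_of_lt hpl)
      _ = 1 / β := key
  · constructor
    · intro heq
      by_contra hdne
      have hd' : 0 < d := lt_of_le_of_ne hd (Ne.symm hdne)
      -- the integral of the nonneg difference is zero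
      have hIeq : (∫ r in Ioi (0:ℝ), Real.exp (-(π * lam * β * r) - d * r ^ (α / 2)))
          = 1 / (π * lam * β) := by
        have := heq
        rw [← key] at this
        exact mul_left_cancel₀ (ne_of_gt hpl) this
      have hdiff : ∫ r in Ioi (0:ℝ),
          (Real.exp (-(π * lam * β * r)) - Real.exp (-(π * lam * β * r) - d * r ^ (α / 2)))
          = 0 := by
        rw [integral_sub hint_g hint_f, hgint, hIeq, sub_self]
      have hnn : 0 ≤ᵐ[volume.restrict (Ioi (0:ℝ))] (fun r : ℝ =>
          Real.exp (-(π * lam * β * r)) - Real.exp (-(π * lam * β * r) - d * r ^ (α / 2))) := by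
        filter_upwards [ae_restrict_mem measurableSet_Ioi] with r hr
        simpa using hle r hr
      have hzero := (integral_eq_zero_iff_of_nonneg_ae hnn (hint_g.sub hint_f)).mp hdiff
      -- but the difference is strictly positive on Ioi 0
      have hpos : ∀ r ∈ Ioi (0:ℝ), 0 <
          Real.exp (-(π * lam * β * r)) - Real.exp (-(π * lam * β * r) - d * r ^ (α / 2)) := by
        intro r hr
        have hr0 : (0:ℝ) < r := hr
        have : Real.exp (-(π * lam * β * r) - d * r ^ (α / 2))
            < Real.exp (-(π * lam * β * r)) := by
          apply Real.exp_lt_exp.mpr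
          have : 0 < d * r ^ (α / 2) := by
            apply mul_pos hd' (Real.rpow_pos_of_pos hr0 _)
          linarith
        linarith
      have : ∀ᵐ r ∂(volume.restrict (Ioi (0:ℝ))), False := by
        filter_upwards [hzero, ae_restrict_mem measurableSet_Ioi] with r h0 hr
        simp only [Pi.zero_apply] at h0
        exact absurd h0.symm (ne_of_lt (hpos r hr))
      rw [ae_iff] at this
      simp only [not_false_eq_true] at this
      have hmes : volume.restrict (Ioi (0:ℝ)) univ = 0 := by
        simpa using this
      rw [Measure.restrict_apply_univ] at hmes
      simp [Real.volume_Ioi] at hmes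
    · intro hd0
      subst hd0
      have : (∫ r in Ioi (0:ℝ), Real.exp (-(π * lam * β * r) - 0 * r ^ (α / 2)))
          = 1 / (π * lam * β) := by
        rw [← hgint]
        refine setIntegral_congr_fun measurableSet_Ioi fun r _ => ?_
        ring_nf
      rw [this, key]
end
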